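/- arXiv:1802.05066 — 6 statements merged into one kernel-verified Lean document; each statement's English description precedes it below -/
import Mathlib

section
/- For any integer n ≥ 1 and any real numbers x_0, ..., x_n with sum zero, one has ∑_{0 ≤ i,j ≤ n} x_i x_j log(1 + |i - j|) ≤ 0, with equality only when all x_i are zero. -/
open Finset MeasureTheory

noncomputable def AA (x : ℕ → ℝ) (r : ℝ) (k : ℕ) : ℝ := ∑ i ∈ range (k+1), x i * r^(k-i)

lemma AA_succ (x : ℕ → ℝ) (r : ℝ) (k : ℕ) :
    AA x r (k+1) = r * AA x r k + x (k+1) := by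
  unfold AA
  rw [Finset.sum_range_succ, Nat.sub_self, pow_zero, mul_one, Finset.mul_sum]
  congr 1
  refine Finset.sum_congr rfl fun i hi => ?_
  rw [Finset.mem_range] at hi
  have : k + 1 - i = (k - i) + 1 := by omega
  rw [this, pow_succ]
  ring

lemma Qid (x : ℕ → ℝ) (r : ℝ) (n : ℕ) :
    ∑ i ∈ range (n+1), ∑ j ∈ range (n+1), x i * x j * r^(Nat.dist i j)
    = (AA x r n)^2 + (1 - r^2) * ∑ k ∈ range n, (AA x r k)^2 := by
  induction n with
  | zero => simp [AA, Nat.dist]; ring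
  | succ n ih =>
    rw [Finset.sum_range_succ,
        Finset.sum_congr rfl fun i (hi : i ∈ range (n+1)) => Finset.sum_range_succ (fun j => x i * x j * r^(Nat.dist i j)) (n+1),
        Finset.sum_add_distrib, Finset.sum_range_succ (fun j => x (n+1) * x j * r^(Nat.dist (n+1) j)) (n+1)]
    have hdist : ∀ i ∈ range (n+1), Nat.dist i (n+1) = (n - i) + 1 := by
      intro i hi; rw [Finset.mem_range] at hi; simp [Nat.dist]; omega
    have hdist2 : ∀ j ∈ range (n+1), Nat.dist (n+1) j = (n - j) + 1 := by
      intro j hj; rw [Finset.mem_range] at hj; simp [Nat.dist]; omega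
    have e1 : ∑ i ∈ range (n+1), x i * x (n+1) * r^(Nat.dist i (n+1))
        = x (n+1) * (r * AA x r n) := by
      rw [Finset.sum_congr rfl fun i hi => by rw [hdist i hi]]
      unfold AA
      rw [Finset.mul_sum, Finset.mul_sum]
      refine Finset.sum_congr rfl fun i hi => ?_
      rw [pow_succ]; ring
    have e2 : ∑ j ∈ range (n+1), x (n+1) * x j * r^(Nat.dist (n+1) j)
        = x (n+1) * (r * AA x r n) := by
      rw [Finset.sum_congr rfl fun j hj => by rw [hdist2 j hj]]
      unfold AA
      rw [Finset.mul_sum, Finset.mul_sum]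
      refine Finset.sum_congr rfl fun j hj => ?_
      rw [pow_succ]; ring
    rw [e1, e2, ih, Nat.dist_self, pow_zero, AA_succ, Finset.sum_range_succ]
    ring

lemma Q_nonneg (x : ℕ → ℝ) (n : ℕ) {r : ℝ} (h0 : 0 ≤ r) (h1 : r ≤ 1) :
    0 ≤ ∑ i ∈ range (n+1), ∑ j ∈ range (n+1), x i * x j * r^(Nat.dist i j) := by
  rw [Qid]
  have h2 : (0:ℝ) ≤ 1 - r^2 := by nlinarith
  exact add_nonneg (sq_nonneg _)
    (mul_nonneg h2 (Finset.sum_nonneg fun k _ => sq_nonneg _))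

lemma Q_zero (x : ℕ → ℝ) (n : ℕ) {r : ℝ} (h0 : 0 ≤ r) (h1 : r < 1)
    (hQ : ∑ i ∈ range (n+1), ∑ j ∈ range (n+1), x i * x j * r^(Nat.dist i j) = 0) :
    ∀ k ≤ n, x k = 0 := by
  rw [Qid] at hQ
  have h2 : (0:ℝ) < 1 - r^2 := by nlinarith
  have hsum : ∑ k ∈ range n, (AA x r k)^2 = 0 := by
    nlinarith [sq_nonneg (AA x r n), Finset.sum_nonneg (fun k (_ : k ∈ range n) => sq_nonneg (AA x r k))]
  have hAn : AA x r n = 0 := by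
    nlinarith [sq_nonneg (AA x r n), Finset.sum_nonneg (fun k (_ : k ∈ range n) => sq_nonneg (AA x r k))]
  have hAk : ∀ k ≤ n, AA x r k = 0 := by
    intro k hk
    rcases eq_or_lt_of_le hk with h | h
    · rw [h]; exact hAn
    · have := (Finset.sum_eq_zero_iff_of_nonneg (fun k _ => sq_nonneg (AA x r k))).mp hsum
      exact pow_eq_zero_iff (n := 2) (by norm_num) |>.mp (this k (Finset.mem_range.mpr h))
  intro k
  induction k with
  | zero => intro hk
            have := hAk 0 (Nat.zero_le n)
            unfold AA at this; simpa using this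
  | succ k ih =>
    intro hk
    have h1' := hAk (k+1) hk
    have h2' := hAk k (by omega)
    rw [AA_succ, h2'] at h1'
    linarith [h1']

-- bound on g_m
lemma g_bounds {m : ℕ} {r : ℝ} (h0 : 0 < r) (h1 : r < 1) :
    0 ≤ (1 - r^m) / (-Real.log r) ∧ (1 - r^m) / (-Real.log r) ≤ m := by
  have hlog : Real.log r < 0 := Real.log_neg h0 h1
  have hpos : 0 < -Real.log r := by linarith
  constructor
  · apply div_nonneg _ hpos.le
    have : r ^ m ≤ 1 := pow_le_one₀ h0.le h1.le
    linarith
  · rw [div_le_iff₀ hpos]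
    have hb : 1 + (m:ℝ) * (r - 1) ≤ (1 + (r - 1)) ^ m := one_add_mul_le_pow (by linarith) m
    have hb' : 1 - r ^ m ≤ m * (1 - r) := by
      have : (1 + (r-1)) ^ m = r ^ m := by ring_nf
      nlinarith [hb]
    have hl : 1 - r ≤ -Real.log r := by
      have := Real.log_le_sub_one_of_pos h0
      linarith
    nlinarith [hl, hb', (show (0:ℝ) ≤ m by positivity)]

lemma cast_dist (i j : ℕ) : ((Nat.dist i j : ℕ) : ℝ) = |(i:ℝ) - (j:ℝ)| := by
  rcases le_total i j with h | h
  · have h1 : Nat.dist i j = j - i := by simp [Nat.dist]; omega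
    rw [h1, Nat.cast_sub h, abs_sub_comm, abs_of_nonneg (by simp [h] : (0:ℝ) ≤ (j:ℝ) - i)]
  · have h1 : Nat.dist i j = i - j := by simp [Nat.dist]; omega
    rw [h1, Nat.cast_sub h, abs_of_nonneg (by simp [h] : (0:ℝ) ≤ (i:ℝ) - j)]

-- integrability of g_m on Ioo 0 1
lemma g_integrable (m : ℕ) :
    IntegrableOn (fun r : ℝ => (1 - r^m) / (-Real.log r)) (Set.Ioo 0 1) := by
  have hmeas : AEStronglyMeasurable (fun r : ℝ => (1 - r^m) / (-Real.log r))
      (volume.restrict (Set.Ioo (0:ℝ) 1)) := by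
    apply Measurable.aestronglyMeasurable
    exact (measurable_const.sub (measurable_id.pow_const m)).div Real.measurable_log.neg
  refine Integrable.mono' (integrable_const (m:ℝ)) hmeas ?_
  filter_upwards [ae_restrict_mem measurableSet_Ioo] with r hr
  obtain ⟨h0, h1⟩ := (g_bounds hr.1 hr.2)
  rw [Real.norm_eq_abs, abs_of_nonneg h0]
  exact h1
open Finset MeasureTheory intervalIntegral

lemma exp_log_mul_eq_pow {r : ℝ} (h0 : 0 < r) (m : ℕ) :
    Real.exp (Real.log r * m) = r ^ m := by
  rw [mul_comm, Real.exp_nat_mul, Real.exp_log h0]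

-- inner s-integral
set_option maxHeartbeats 1000000
lemma inner_s (m : ℕ) {r : ℝ} (h0 : 0 < r) (h1 : r < 1) :
    ∫ s in Set.Ioo (0:ℝ) (m:ℝ), Real.exp (Real.log r * s)
      = (1 - r^m) / (-Real.log r) := by
  have hlog : Real.log r < 0 := Real.log_neg h0 h1
  have hne : Real.log r ≠ 0 := ne_of_lt hlog
  have hm : (0:ℝ) ≤ m := Nat.cast_nonneg m
  rw [← integral_Ioc_eq_integral_Ioo, ← intervalIntegral.integral_of_le hm]
  have hderiv : ∀ s ∈ Set.uIcc (0:ℝ) (m:ℝ),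
      HasDerivAt (fun t => Real.exp (Real.log r * t) / Real.log r)
        (Real.exp (Real.log r * s)) s := by
    intro s _
    have h := (((hasDerivAt_id s).const_mul (Real.log r)).exp).div_const (Real.log r)
    convert h using 1
    · rfl
    · rfl
    · rfl
    · simp [hne]
  have hcont : ContinuousOn (fun s : ℝ => Real.exp (Real.log r * s)) (Set.uIcc (0:ℝ) (m:ℝ)) := by
    fun_prop
  rw [intervalIntegral.integral_eq_sub_of_hasDerivAt hderiv hcont.intervalIntegrable]
  rw [exp_log_mul_eq_pow h0, mul_zero, Real.exp_zero]
  rw [div_sub_div_same, div_eq_div_iff hne (neg_ne_zero.mpr hne)]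
  ring

-- inner r-integral
lemma inner_r {s : ℝ} (hs : 0 < s) :
    ∫ r in Set.Ioo (0:ℝ) 1, Real.exp (Real.log r * s) = 1 / (s + 1) := by
  have : ∫ r in Set.Ioo (0:ℝ) 1, Real.exp (Real.log r * s)
      = ∫ r in Set.Ioo (0:ℝ) 1, r ^ s := by
    refine setIntegral_congr_fun measurableSet_Ioo fun r hr => ?_
    rw [Real.rpow_def_of_pos hr.1]
  rw [this, ← integral_Ioc_eq_integral_Ioo, ← intervalIntegral.integral_of_le zero_le_one,
    integral_rpow (Or.inl (by linarith))]
  rw [Real.one_rpow, Real.zero_rpow (by linarith)]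
  ring

-- final s-integral
lemma final_s (m : ℕ) :
    ∫ s in Set.Ioo (0:ℝ) (m:ℝ), 1 / (s + 1) = Real.log (1 + m) := by
  have hm : (0:ℝ) ≤ m := Nat.cast_nonneg m
  rw [← integral_Ioc_eq_integral_Ioo, ← intervalIntegral.integral_of_le hm]
  have hderiv : ∀ s ∈ Set.uIcc (0:ℝ) (m:ℝ),
      HasDerivAt (fun t => Real.log (1 + t)) (1 / (s + 1)) s := by
    intro s hs
    rw [Set.uIcc_of_le hm] at hs
    have h1 : (0:ℝ) < 1 + s := by linarith [hs.1]
    have h := ((hasDerivAt_id s).const_add 1).log (ne_of_gt h1)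
    convert h using 1
    show 1 / (s + 1) = 1 / (1 + s); rw [add_comm]
    rfl
  have hcont : ContinuousOn (fun s : ℝ => 1 / (s + 1)) (Set.uIcc (0:ℝ) (m:ℝ)) := by
    apply ContinuousOn.div continuousOn_const (by fun_prop)
    intro s hs
    rw [Set.uIcc_of_le hm] at hs
    intro h; linarith [hs.1]
  rw [intervalIntegral.integral_eq_sub_of_hasDerivAt hderiv
      (hcont.intervalIntegrable)]
  simp

-- the Frullani-type identity
lemma I_eq (m : ℕ) :
    ∫ r in Set.Ioo (0:ℝ) 1, (1 - r^m)/(-Real.log r) = Real.log (1 + m) := by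
  set μ := volume.restrict (Set.Ioo (0:ℝ) 1)
  set ν := volume.restrict (Set.Ioo (0:ℝ) (m:ℝ))
  have hint : Integrable (Function.uncurry fun r s => Real.exp (Real.log r * s)) (μ.prod ν) := by
    have hmeas : Measurable (Function.uncurry fun r s : ℝ => Real.exp (Real.log r * s)) := by
      exact ((Real.measurable_log.comp measurable_fst).mul measurable_snd).exp
    haveI : IsFiniteMeasure μ := by
      constructor; simp [μ, Real.volume_Ioo]
    haveI : IsFiniteMeasure ν := by
      constructor; simp [ν, Real.volume_Ioo]
    refine Integrable.mono' (integrable_const 1) hmeas.aestronglyMeasurable ?_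
    have : μ.prod ν = (volume.prod volume).restrict ((Set.Ioo (0:ℝ) 1) ×ˢ (Set.Ioo (0:ℝ) (m:ℝ))) :=
      Measure.prod_restrict _ _
    rw [this]
    filter_upwards [ae_restrict_mem (measurableSet_Ioo.prod measurableSet_Ioo)] with p hp
    obtain ⟨⟨h0, h1⟩, ⟨hs0, _⟩⟩ := hp
    simp only [Function.uncurry, Real.norm_eq_abs]
    rw [abs_of_nonneg (Real.exp_nonneg _)]
    rw [Real.exp_le_one_iff]
    exact mul_nonpos_of_nonpos_of_nonneg (Real.log_nonpos h0.le h1.le) hs0.le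
  have swap := integral_integral_swap hint
  have hL : ∫ r, (∫ s, Real.exp (Real.log r * s) ∂ν) ∂μ
      = ∫ r in Set.Ioo (0:ℝ) 1, (1 - r^m)/(-Real.log r) := by
    refine setIntegral_congr_fun measurableSet_Ioo fun r hr => ?_
    exact inner_s m hr.1 hr.2
  have hR : ∫ s, (∫ r, Real.exp (Real.log r * s) ∂μ) ∂ν
      = Real.log (1 + m) := by
    rw [← final_s m]
    refine setIntegral_congr_fun measurableSet_Ioo fun s hs => ?_
    exact inner_r hs.1
  rw [← hL, swap, hR]
theorem stmt_0 (n : ℕ) (hn : 1 ≤ n) (x : Fin (n + 1) → ℝ)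
    (hx : ∑ i, x i = 0) :
    (∑ i, ∑ j, x i * x j * Real.log (1 + |(i.1 : ℝ) - (j.1 : ℝ)|)) ≤ 0 ∧
    ((∑ i, ∑ j, x i * x j * Real.log (1 + |(i.1 : ℝ) - (j.1 : ℝ)|)) = 0 → x = 0) := by
  classical
  set X : ℕ → ℝ := fun k => if h : k < n+1 then x ⟨k, h⟩ else 0 with hXdef
  have hXx : ∀ i : Fin (n+1), X i.1 = x i := by
    intro i; simp [hXdef, i.isLt]; intro h; have := i.isLt; omega
  have hx0 : ∑ k ∈ range (n+1), X k = 0 := by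
    rw [← Fin.sum_univ_eq_sum_range (fun k => X k) (n+1)]
    rw [Finset.sum_congr rfl fun i _ => hXx i]
    exact hx
  set s : Finset (ℕ × ℕ) := (range (n+1)) ×ˢ (range (n+1)) with hsdef
  set d : ℕ × ℕ → ℕ := fun p => Nat.dist p.1 p.2 with hddef
  -- rewrite L as a sum over the product finset
  have hL : (∑ i, ∑ j, x i * x j * Real.log (1 + |(i.1 : ℝ) - (j.1 : ℝ)|))
      = ∑ p ∈ s, (X p.1 * X p.2) * Real.log (1 + (d p : ℝ)) := by
    rw [hsdef, Finset.sum_product,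
        ← Fin.sum_univ_eq_sum_range
          (fun i => ∑ j ∈ range (n+1), (X i * X j) * Real.log (1 + ((d (i, j)) : ℝ))) (n+1)]
    refine Finset.sum_congr rfl fun i _ => ?_
    rw [← Fin.sum_univ_eq_sum_range
          (fun j => (X i.1 * X j) * Real.log (1 + ((d (i.1, j)) : ℝ))) (n+1)]
    refine Finset.sum_congr rfl fun j _ => ?_
    rw [hXx i, hXx j, hddef]
    rw [cast_dist]
  -- the quadratic form
  set Qf : ℝ → ℝ := fun r => ∑ i ∈ range (n+1), ∑ j ∈ range (n+1), X i * X j * r^(Nat.dist i j)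
    with hQdef
  set μ := volume.restrict (Set.Ioo (0:ℝ) 1) with hμdef
  have hint : ∀ p ∈ s, Integrable
      (fun r : ℝ => (X p.1 * X p.2) * ((1 - r^(d p))/(-Real.log r))) μ :=
    fun p _ => (g_integrable (d p)).const_mul _
  have hsum_int : Integrable
      (fun r : ℝ => ∑ p ∈ s, (X p.1 * X p.2) * ((1 - r^(d p))/(-Real.log r))) μ :=
    integrable_finset_sum s hint
  -- pointwise identity on Ioo 0 1
  have key : ∀ r ∈ Set.Ioo (0:ℝ) 1,
      (∑ p ∈ s, (X p.1 * X p.2) * ((1 - r^(d p))/(-Real.log r))) = -(Qf r / (-Real.log r)) := by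
    intro r hr
    have hlog : Real.log r < 0 := Real.log_neg hr.1 hr.2
    have hz : ∑ p ∈ s, X p.1 * X p.2 = 0 := by
      rw [hsdef, Finset.sum_product, ← Finset.sum_mul_sum, hx0, zero_mul]
    have hq : ∑ p ∈ s, X p.1 * X p.2 * r ^ (d p) = Qf r := by
      rw [hsdef, Finset.sum_product]
    have e : ∀ p ∈ s, (X p.1 * X p.2) * ((1 - r^(d p))/(-Real.log r))
        = X p.1 * X p.2 * (-Real.log r)⁻¹ - (X p.1 * X p.2 * r^(d p)) * (-Real.log r)⁻¹ := by
      intro p _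
      rw [div_eq_mul_inv]
      ring
    rw [Finset.sum_congr rfl e, Finset.sum_sub_distrib, ← Finset.sum_mul, ← Finset.sum_mul,
        hz, hq, zero_mul, div_eq_mul_inv]
    ring
  -- main integral formula for L
  have hLint : (∑ i, ∑ j, x i * x j * Real.log (1 + |(i.1 : ℝ) - (j.1 : ℝ)|))
      = -∫ r in Set.Ioo (0:ℝ) 1, Qf r / (-Real.log r) := by
    rw [hL]
    have e1 : ∀ p ∈ s, (X p.1 * X p.2) * Real.log (1 + (d p : ℝ))
        = ∫ r in Set.Ioo (0:ℝ) 1, (X p.1 * X p.2) * ((1 - r^(d p))/(-Real.log r)) := by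
      intro p _
      rw [MeasureTheory.integral_const_mul, I_eq (d p)]
    rw [Finset.sum_congr rfl e1, ← integral_finset_sum s hint,
        setIntegral_congr_fun measurableSet_Ioo key, MeasureTheory.integral_neg]
  have hnonneg : 0 ≤ ∫ r in Set.Ioo (0:ℝ) 1, Qf r / (-Real.log r) := by
    refine setIntegral_nonneg measurableSet_Ioo fun r hr => ?_
    have hlog : Real.log r < 0 := Real.log_neg hr.1 hr.2
    exact div_nonneg (Q_nonneg X n hr.1.le hr.2.le) (by linarith)
  constructor
  · rw [hLint]; linarith
  · intro hL0
    by_contra hxne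
    obtain ⟨i0, hi0⟩ := Function.ne_iff.mp hxne
    have hX0 : X i0.1 ≠ 0 := by rw [hXx i0]; simpa using hi0
    have hpos : ∀ r ∈ Set.Ioo (0:ℝ) 1, 0 < Qf r / (-Real.log r) := by
      intro r hr
      have hlog : Real.log r < 0 := Real.log_neg hr.1 hr.2
      have hQpos : 0 < Qf r := by
        rcases lt_or_eq_of_le (Q_nonneg X n (r := r) hr.1.le hr.2.le) with h | h
        · exact h
        · exfalso
          exact hX0 (Q_zero X n hr.1.le hr.2 h.symm i0.1 (by omega))
      exact div_pos hQpos (by linarith)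
    -- integrability of the positive integrand
    have hQint : IntegrableOn (fun r => Qf r / (-Real.log r)) (Set.Ioo (0:ℝ) 1) := by
      refine MeasureTheory.IntegrableOn.congr_fun (hsum_int.neg) ?_ measurableSet_Ioo
      intro r hr
      simp only [Pi.neg_apply]
      rw [key r hr, neg_neg]
    have hII : IntervalIntegrable (fun r => Qf r / (-Real.log r)) volume 0 1 := by
      rw [intervalIntegrable_iff_integrableOn_Ioc_of_le zero_le_one]
      exact hQint.congr_set_ae Ioo_ae_eq_Ioc.symm
    have hposint := intervalIntegral.intervalIntegral_pos_of_pos_on hII hpos zero_lt_one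
    have hIoo : ∫ r in Set.Ioo (0:ℝ) 1, Qf r / (-Real.log r) = 0 := by
      rw [hLint] at hL0
      linarith
    have hzero : ∫ r in (0:ℝ)..1, Qf r / (-Real.log r) = 0 := by
      rw [intervalIntegral.integral_of_le zero_le_one, integral_Ioc_eq_integral_Ioo]
      exact hIoo
    rw [hzero] at hposint
    exact lt_irrefl 0 hposint
end

section
/- For every integer n ≥ 0, the (n+1)×(n+1) real symmetric matrix with (i,j)-entry 1/(1 + |i - j|) is positive definite. -/
open Finset intervalIntegral

lemma tele (t : ℝ) (k m : ℕ) :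
    (1 - t^2) * ∑ j ∈ Finset.range (m+1), t^(2*j+k) = t^k - t^(2*m+2+k) := by
  induction m with
  | zero => simp; ring
  | succ m ih =>
      rw [Finset.sum_range_succ, mul_add, ih]
      ring

lemma pairLE (t : ℝ) (N a b : ℕ) (hab : a ≤ b) (hb : b ≤ N) :
    t^2 * (t^a * t^b) + (1-t^2) * ∑ j ∈ Finset.range (N+1),
      ((if j ≤ a then t^(a-j) else 0) * (if j ≤ b then t^(b-j) else 0))
      = t^(Nat.dist a b) := by
  have h1 : ∑ j ∈ Finset.range (N+1),
      ((if j ≤ a then t^(a-j) else 0) * (if j ≤ b then t^(b-j) else 0))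
      = ∑ j ∈ Finset.range (a+1), t^((a-j)+(b-j)) := by
    rw [← Finset.sum_subset (Finset.range_subset_range.mpr (by omega) : Finset.range (a+1) ⊆ Finset.range (N+1))]
    · apply Finset.sum_congr rfl
      intro j hj
      simp only [Finset.mem_range] at hj
      rw [if_pos (by omega), if_pos (by omega), ← pow_add]
    · intro j hjN hja
      simp only [Finset.mem_range] at hjN hja
      rw [if_neg (by omega), zero_mul]
  have h2 : ∑ j ∈ Finset.range (a+1), t^((a-j)+(b-j))
      = ∑ j ∈ Finset.range (a+1), t^(2*j+(b-a)) := by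
    rw [← Finset.sum_range_reflect (fun j => t^((a-j)+(b-j))) (a+1)]
    apply Finset.sum_congr rfl
    intro j hj
    simp only [Finset.mem_range] at hj
    congr 1
    omega
  rw [h1, h2, tele t (b-a) a, Nat.dist_eq_sub_of_le hab]
  rw [← pow_add, ← pow_add]
  have : 2 + (a + b) = 2*a+2+(b-a) := by omega
  rw [this]
  ring

lemma pair (t : ℝ) (N a b : ℕ) (ha : a ≤ N) (hb : b ≤ N) :
    t^2 * (t^a * t^b) + (1-t^2) * ∑ j ∈ Finset.range (N+1),
      ((if j ≤ a then t^(a-j) else 0) * (if j ≤ b then t^(b-j) else 0))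
      = t^(Nat.dist a b) := by
  rcases le_total a b with h | h
  · exact pairLE t N a b h hb
  · have := pairLE t N b a h ha
    rw [Nat.dist_comm]
    rw [← this]
    congr 1
    · ring
    · congr 1
      apply Finset.sum_congr rfl
      intro j _
      ring

lemma kms_pos (n : ℕ) (t : ℝ) (ht : t ∈ Set.Ioo (0:ℝ) 1) (x : Fin (n+1) → ℝ)
    (hx : x ≠ 0) :
    0 < ∑ i : Fin (n+1), ∑ j : Fin (n+1), x i * x j * t^(Nat.dist i.1 j.1) := by
  obtain ⟨ht0, ht1⟩ := ht
  set c : ℕ → ℕ → ℝ := fun j a => if j ≤ a then t^(a-j) else 0 with hc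
  set y : ℕ → ℝ := fun j => ∑ i : Fin (n+1), c j i.1 * x i with hy
  have hy2 : ∀ j, (y j)^2 = ∑ i : Fin (n+1), ∑ i' : Fin (n+1),
      (c j i.1 * x i) * (c j i'.1 * x i') := by
    intro j
    rw [sq, hy, Finset.sum_mul_sum]
  -- the sum-of-squares identity
  have identity : t^2 * (y 0)^2 + (1-t^2) * ∑ j ∈ Finset.range (n+1), (y j)^2
      = ∑ i : Fin (n+1), ∑ i' : Fin (n+1), x i * x i' * t^(Nat.dist i.1 i'.1) := by
    simp only [hy2]
    have e1 : ∑ j ∈ Finset.range (n+1), ∑ i : Fin (n+1), ∑ i' : Fin (n+1),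
        (c j i.1 * x i) * (c j i'.1 * x i')
        = ∑ i : Fin (n+1), ∑ i' : Fin (n+1), ∑ j ∈ Finset.range (n+1),
        (c j i.1 * x i) * (c j i'.1 * x i') := by
      rw [Finset.sum_comm]
      exact Finset.sum_congr rfl fun i _ => Finset.sum_comm
    rw [e1, Finset.mul_sum, Finset.mul_sum, ← Finset.sum_add_distrib]
    apply Finset.sum_congr rfl
    intro i _
    rw [Finset.mul_sum, Finset.mul_sum, ← Finset.sum_add_distrib]
    apply Finset.sum_congr rfl
    intro i' _
    have h1 : i.1 ≤ n := Nat.lt_succ_iff.mp i.isLt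
    have h2 : i'.1 ≤ n := Nat.lt_succ_iff.mp i'.isLt
    have hp : t^2 * (t^(i.1) * t^(i'.1)) + (1-t^2) * ∑ j ∈ Finset.range (n+1),
        c j i.1 * c j i'.1 = t^(Nat.dist i.1 i'.1) := pair t n i.1 i'.1 h1 h2
    have hterm : ∀ j, (c j i.1 * x i) * (c j i'.1 * x i')
        = (c j i.1 * c j i'.1) * (x i * x i') := fun j => by ring
    simp only [hterm]
    rw [← Finset.sum_mul]
    have hc0 : ∀ a : ℕ, c 0 a = t^a := fun a => by simp [hc]
    rw [hc0, hc0]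
    linear_combination (x i * x i') * hp
  -- recursion and strictness
  have htop : ∀ j : ℕ, n+1 ≤ j → y j = 0 := by
    intro j hj
    apply Finset.sum_eq_zero
    intro i _
    have := i.isLt
    rw [hc]
    simp only
    rw [if_neg (by omega), zero_mul]
  have hrec : ∀ (j : ℕ) (hj : j < n+1), y j = x ⟨j, hj⟩ + t * y (j+1) := by
    intro j hj
    rw [hy]
    simp only
    rw [Finset.mul_sum]
    have hxj : x ⟨j, hj⟩ = ∑ i : Fin (n+1), (if i = (⟨j, hj⟩ : Fin (n+1)) then x i else 0) := by
      rw [Finset.sum_ite_eq' Finset.univ (⟨j, hj⟩ : Fin (n+1)) x, if_pos (Finset.mem_univ _)]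
    rw [hxj, ← Finset.sum_add_distrib]
    apply Finset.sum_congr rfl
    intro i _
    rw [hc]
    simp only
    by_cases hij : i.1 = j
    · have heq : i = (⟨j, hj⟩ : Fin (n+1)) := Fin.ext hij
      rw [if_pos heq, if_pos (show j ≤ i.1 by omega), if_neg (show ¬ j+1 ≤ i.1 by omega)]
      simp [hij]
    · have hne : i ≠ (⟨j, hj⟩ : Fin (n+1)) := fun h => hij (by rw [h])
      rw [if_neg hne, zero_add]
      by_cases h2 : j+1 ≤ i.1
      · rw [if_pos h2, if_pos (show j ≤ i.1 by omega),
          show i.1 - j = (i.1-(j+1))+1 from by omega, pow_succ]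
        ring
      · rw [if_neg h2, if_neg (show ¬ j ≤ i.1 by omega)]
        ring
  have hS : 0 < ∑ j ∈ Finset.range (n+1), (y j)^2 := by
    have hne : ∑ j ∈ Finset.range (n+1), (y j)^2 ≠ 0 := by
      intro hall0
      have hall := (Finset.sum_eq_zero_iff_of_nonneg
        (fun j _ => sq_nonneg (y j))).mp hall0
      apply hx
      have hzero : ∀ j : ℕ, y j = 0 := by
        intro j
        by_cases hj : j < n+1
        · exact pow_eq_zero_iff (n := 2) (by norm_num) |>.mp (hall j (Finset.mem_range.mpr hj))
        · exact htop j (by omega)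
      funext i
      have h5 := hrec i.1 i.isLt
      rw [hzero i.1, hzero (i.1+1)] at h5
      have h6 : x ⟨i.1, i.isLt⟩ = 0 := by linarith
      simpa using h6
    exact lt_of_le_of_ne (Finset.sum_nonneg fun j _ => sq_nonneg (y j)) (Ne.symm hne)
  rw [← identity]
  have h0 : (0:ℝ) ≤ t^2 * (y 0)^2 := by positivity
  have h1 : (0:ℝ) < 1 - t^2 := by nlinarith
  nlinarith


theorem stmt_1 (n : ℕ) :
    Matrix.PosDef (Matrix.of fun i j : Fin (n + 1) =>
      (1 : ℝ) / (1 + |(i.1 : ℝ) - (j.1 : ℝ)|)) := by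
  rw [Matrix.posDef_iff_dotProduct_mulVec]
  constructor
  · ext i j
    simp [Matrix.conjTranspose_apply, abs_sub_comm]
  · intro x hx
    have habs : ∀ i j : Fin (n+1), |(i.1:ℝ) - (j.1:ℝ)| = (Nat.dist i.1 j.1 : ℝ) := by
      intro i j
      rcases le_total i.1 j.1 with h | h
      · rw [Nat.dist_eq_sub_of_le h, abs_sub_comm, abs_of_nonneg (by push_cast; simp [h])]
        push_cast [h]
        ring
      · rw [Nat.dist_eq_sub_of_le_right h, abs_of_nonneg (by push_cast; simp [h])]
        push_cast [h]
        ring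
    have entry : ∀ i j : Fin (n+1), (1:ℝ)/(1+|(i.1:ℝ) - (j.1:ℝ)|)
        = ∫ t in (0:ℝ)..1, t^(Nat.dist i.1 j.1) := by
      intro i j
      rw [integral_pow, habs i j]
      norm_num
      rw [add_comm]
    have hint : ∀ (c : ℝ) (d : ℕ), IntervalIntegrable (fun t => c * t^d)
        MeasureTheory.volume (0:ℝ) 1 :=
      fun c d => (continuous_const.mul (continuous_pow d)).intervalIntegrable 0 1
    have hint2 : ∀ i : Fin (n+1), IntervalIntegrable
        (fun t => ∑ j : Fin (n+1), x i * x j * t^(Nat.dist i.1 j.1))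
        MeasureTheory.volume (0:ℝ) 1 := by
      intro i
      apply Continuous.intervalIntegrable
      apply continuous_finset_sum
      intro j _
      exact continuous_const.mul (continuous_pow _)
    have hint3 : IntervalIntegrable
        (fun t => ∑ i : Fin (n+1), ∑ j : Fin (n+1), x i * x j * t^(Nat.dist i.1 j.1))
        MeasureTheory.volume (0:ℝ) 1 := by
      apply Continuous.intervalIntegrable
      apply continuous_finset_sum
      intro i _
      apply continuous_finset_sum
      intro j _
      exact continuous_const.mul (continuous_pow _)
    have swap : (∫ t in (0:ℝ)..1, ∑ i : Fin (n+1), ∑ j : Fin (n+1),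
          x i * x j * t^(Nat.dist i.1 j.1))
        = ∑ i : Fin (n+1), ∑ j : Fin (n+1),
          (x i * x j) * ∫ t in (0:ℝ)..1, t^(Nat.dist i.1 j.1) := by
      rw [intervalIntegral.integral_finset_sum (fun i _ => hint2 i)]
      apply Finset.sum_congr rfl
      intro i _
      rw [intervalIntegral.integral_finset_sum (fun j _ => hint (x i * x j) _)]
      apply Finset.sum_congr rfl
      intro j _
      exact intervalIntegral.integral_const_mul _ _
    have key : dotProduct (star x) ((Matrix.of fun i j : Fin (n + 1) =>
        (1 : ℝ) / (1 + |(i.1 : ℝ) - (j.1 : ℝ)|)).mulVec x)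
        = ∫ t in (0:ℝ)..1, ∑ i : Fin (n+1), ∑ j : Fin (n+1),
          x i * x j * t^(Nat.dist i.1 j.1) := by
      rw [swap]
      simp only [dotProduct, Matrix.mulVec, Matrix.of_apply, Pi.star_apply,
        star_trivial]
      apply Finset.sum_congr rfl
      intro i _
      rw [Finset.mul_sum]
      apply Finset.sum_congr rfl
      intro j _
      rw [← entry i j]
      ring
    rw [key]
    exact intervalIntegral_pos_of_pos_on hint3 (fun t ht => kms_pos n t ht x hx)
      (by norm_num)
end

section
/- For every integer n ≥ 1, the real symmetric matrix (log(1 + |i - j|))_{0 ≤ i,j ≤ n} has signature (1, n): it has exactly one positive eigenvalue and n negative eigenvalues (counted with multiplicity), and 0 is not an eigenvalue. -/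
open Finset

namespace Stmt2Aux

noncomputable def u (t : ℕ) : ℝ := Real.log (t + 2) - Real.log (t + 1)

noncomputable def w (d : ℕ) : ℝ :=
  2 * Real.log (d + 1) - Real.log d - Real.log (d + 2)

lemma u_pos (t : ℕ) : 0 < u t := by
  have h : (t : ℝ) + 1 < t + 2 := by linarith
  have := Real.log_lt_log (by positivity) h
  simpa [u] using sub_pos.mpr this

lemma w_succ (d : ℕ) : w (d + 1) = u d - u (d + 1) := by
  simp only [w, u]
  have e1 : ((d : ℕ) + 1 : ℕ) = ((d : ℕ) + 1) := rfl
  push_cast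
  have e2 : (d : ℝ) + 1 + 1 = d + 2 := by ring
  have e3 : (d : ℝ) + 1 + 2 = d + 3 := by ring
  rw [e2, e3]
  ring

lemma w_succ_pos (d : ℕ) : 0 < w (d + 1) := by
  rw [w_succ]
  have h1 : ((d : ℝ) + 1) * (d + 3) < (d + 2) ^ 2 := by nlinarith [Nat.cast_nonneg (α := ℝ) d]
  have h2 := Real.log_lt_log (by positivity) h1
  rw [Real.log_mul (by positivity) (by positivity), Real.log_pow] at h2
  push_cast at h2
  simp only [u]
  push_cast
  have e2 : (d : ℝ) + 1 + 1 = d + 2 := by ring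
  have e3 : (d : ℝ) + 1 + 2 = d + 3 := by ring
  rw [e2, e3]
  linarith

lemma w_pos {d : ℕ} (hd : 1 ≤ d) : 0 < w d := by
  obtain ⟨e, rfl⟩ := Nat.exists_eq_add_of_le hd
  simpa [Nat.add_comm] using w_succ_pos e

noncomputable def T (M : ℕ) : ℝ := ∑ d ∈ range M, w (d + 1)

lemma T_eq (M : ℕ) : T M = u 0 - u M := by
  rw [T, ← Finset.sum_range_sub' u M]
  exact Finset.sum_congr rfl fun d _ => w_succ d

lemma T_lt (M : ℕ) : T M < Real.log 2 := by
  have hu := u_pos M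
  have h0 : u 0 = Real.log 2 := by norm_num [u]
  rw [T_eq, h0]; linarith

noncomputable def G (m : ℤ) : ℝ := Real.log (1 + |(m : ℝ)|)

lemma G_nat (d : ℕ) : G (d : ℤ) = Real.log (d + 1) := by
  simp [G, abs_of_nonneg (Nat.cast_nonneg (α := ℝ) d), add_comm]

lemma G_neg (m : ℤ) : G (-m) = G m := by simp [G]

noncomputable def R (k l : ℕ) : ℝ :=
  2 * G ((k : ℤ) - l) - G ((k : ℤ) - l - 1) - G ((k : ℤ) - l + 1)

lemma R_symm (k l : ℕ) : R k l = R l k := by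
  unfold R
  rw [show ((l : ℤ) - k - 1) = -((k : ℤ) - l + 1) from by ring,
      show ((l : ℤ) - k + 1) = -((k : ℤ) - l - 1) from by ring,
      show ((l : ℤ) - k) = -((k : ℤ) - l) from by ring,
      G_neg, G_neg, G_neg]
  ring

lemma R_diag (k : ℕ) : R k k = -(2 * Real.log 2) := by
  have h0 : G 0 = 0 := by simp [G]
  have h1 : G 1 = Real.log 2 := by norm_num [G]
  have h2 : G (-1) = Real.log 2 := by rw [G_neg, h1]
  simp only [R, sub_self, zero_sub, zero_add, h0, h1, h2]
  ring

lemma R_off (l d : ℕ) (hd : 1 ≤ d) : R (l + d) l = w d := by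
  have e1 : ((l + d : ℕ) : ℤ) - l = (d : ℤ) := by push_cast; ring
  have e2 : (d : ℤ) - 1 = ((d - 1 : ℕ) : ℤ) := by push_cast [hd]; ring
  have e3 : (d : ℤ) + 1 = ((d + 1 : ℕ) : ℤ) := by push_cast; ring
  rw [R, e1, e2, e3, G_nat, G_nat, G_nat, w]
  have e4 : ((d - 1 : ℕ) : ℝ) + 1 = (d : ℝ) := by push_cast [hd]; ring
  have e5 : ((d + 1 : ℕ) : ℝ) + 1 = (d : ℝ) + 2 := by push_cast; ring
  rw [e4, e5]

lemma R_off' {k l : ℕ} (h : l < k) : R k l = w (k - l) := by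
  have hk : k = l + (k - l) := by omega
  conv_lhs => rw [hk]
  rw [R_off l (k - l) (by omega)]



noncomputable def Roff (k l : ℕ) : ℝ := if k = l then 0 else R k l

lemma Roff_symm (k l : ℕ) : Roff k l = Roff l k := by
  unfold Roff
  by_cases h : k = l
  · simp [h]
  · rw [if_neg h, if_neg (Ne.symm h), R_symm]

lemma Roff_nonneg (k l : ℕ) : 0 ≤ Roff k l := by
  unfold Roff
  rcases lt_trichotomy k l with h | h | h
  · rw [if_neg (by omega), R_symm, R_off' h]
    exact le_of_lt (w_pos (by omega))
  · simp [h]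
  · rw [if_neg (by omega), R_off' h]
    exact le_of_lt (w_pos (by omega))

noncomputable def row (N k : ℕ) : ℝ := ∑ l ∈ range N, Roff k l

lemma row_lt (N k : ℕ) (hk : k < N) : row N k < 2 * Real.log 2 := by
  have h1 : ∑ l ∈ range k, Roff k l = T k := by
    rw [T, ← Finset.sum_range_reflect (fun j => w (j + 1)) k]
    refine Finset.sum_congr rfl fun l hl => ?_
    rw [Finset.mem_range] at hl
    rw [Roff, if_neg (by omega), R_off' hl]
    congr 1
    omega
  have h2 : ∑ l ∈ Ico (k + 1) N, Roff k l = T (N - (k + 1)) := by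
    rw [Finset.sum_Ico_eq_sum_range, T]
    refine Finset.sum_congr rfl fun j hj => ?_
    rw [Roff, if_neg (by omega), R_symm, R_off' (by omega)]
    congr 1
    omega
  have hsplit : row N k = ∑ l ∈ range k, Roff k l + (Roff k k + ∑ l ∈ Ico (k + 1) N, Roff k l) := by
    rw [row, range_eq_Ico, ← Finset.sum_Ico_consecutive _ (Nat.zero_le k) (le_of_lt hk),
      Finset.sum_eq_sum_Ico_succ_bot hk, ← range_eq_Ico]
  have hkk : Roff k k = 0 := by simp [Roff]
  rw [hsplit, h1, h2, hkk]
  have := T_lt k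
  have := T_lt (N - (k + 1))
  linarith

lemma key (N : ℕ) (S : ℕ → ℝ) (k0 : ℕ) (hk0 : k0 < N) (hS0 : S k0 ≠ 0) :
    ∑ k ∈ range N, ∑ l ∈ range N, S k * S l * R k l < 0 := by
  have hb : ∀ k ∈ range N, ∀ l ∈ range N, S k * S l * R k l ≤
      (if k = l then -(2 * Real.log 2) * S k ^ 2 else 0) + Roff k l * (S k ^ 2 / 2)
        + Roff k l * (S l ^ 2 / 2) := by
    intro k _ l _
    by_cases h : k = l
    · subst h
      simp [Roff, R_diag]
      nlinarith [sq_nonneg (S k)]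
    · rw [if_neg h]
      have h1 : Roff k l = R k l := if_neg h
      have h2 := Roff_nonneg k l
      rw [← h1]
      nlinarith [sq_nonneg (S k - S l), sq_nonneg (S k + S l)]
  have hstep : ∑ k ∈ range N, ∑ l ∈ range N, S k * S l * R k l ≤
      ∑ k ∈ range N, ∑ l ∈ range N, ((if k = l then -(2 * Real.log 2) * S k ^ 2 else 0)
        + Roff k l * (S k ^ 2 / 2) + Roff k l * (S l ^ 2 / 2)) :=
    Finset.sum_le_sum fun k hk => Finset.sum_le_sum fun l hl => hb k hk l hl
  have hA : ∀ k ∈ range N,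
      ∑ l ∈ range N, (if k = l then -(2 * Real.log 2) * S k ^ 2 else 0)
        = -(2 * Real.log 2) * S k ^ 2 := by
    intro k hk
    rw [Finset.sum_ite_eq (range N) k (fun _ => -(2 * Real.log 2) * S k ^ 2), if_pos hk]
  have hB : ∀ k, ∑ l ∈ range N, Roff k l * (S k ^ 2 / 2) = row N k * (S k ^ 2 / 2) := by
    intro k
    rw [row, Finset.sum_mul]
  have hC : ∑ k ∈ range N, ∑ l ∈ range N, Roff k l * (S l ^ 2 / 2)
      = ∑ k ∈ range N, row N k * (S k ^ 2 / 2) := by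
    rw [Finset.sum_comm]
    refine Finset.sum_congr rfl fun l _ => ?_
    rw [row, Finset.sum_mul]
    exact Finset.sum_congr rfl fun k _ => by rw [Roff_symm]
  have hsum : ∑ k ∈ range N, ∑ l ∈ range N, ((if k = l then -(2 * Real.log 2) * S k ^ 2 else 0)
        + Roff k l * (S k ^ 2 / 2) + Roff k l * (S l ^ 2 / 2))
      = ∑ k ∈ range N, (-(2 * Real.log 2) * S k ^ 2 + row N k * (S k ^ 2 / 2)
        + row N k * (S k ^ 2 / 2)) := by
    simp only [Finset.sum_add_distrib]
    rw [hC]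
    congr 1
    · congr 1
      · exact Finset.sum_congr rfl hA
      · exact Finset.sum_congr rfl fun k _ => hB k
  have hfin : ∑ k ∈ range N, (-(2 * Real.log 2) * S k ^ 2 + row N k * (S k ^ 2 / 2)
      + row N k * (S k ^ 2 / 2)) < 0 := by
    have hz : (0 : ℝ) = ∑ _k ∈ range N, (0 : ℝ) := by simp
    rw [hz]
    refine Finset.sum_lt_sum (fun k hk => ?_) ⟨k0, Finset.mem_range.mpr hk0, ?_⟩
    · rw [Finset.mem_range] at hk
      have h1 := row_lt N k hk
      nlinarith [sq_nonneg (S k)]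
    · have h1 := row_lt N k0 hk0
      have h2 : 0 < S k0 ^ 2 := by positivity
      nlinarith
  calc ∑ k ∈ range N, ∑ l ∈ range N, S k * S l * R k l ≤ _ := hstep
    _ = _ := hsum
    _ < 0 := hfin



lemma shiftlem {N : ℕ} {S : ℕ → ℝ} (H : ℕ → ℝ) (h0 : S 0 = 0) (hN : S N = 0) :
    ∑ i ∈ range N, S (i + 1) * H (i + 1) = ∑ i ∈ range N, S i * H i := by
  have h1 := Finset.sum_range_succ' (fun i => S i * H i) N
  have h2 := Finset.sum_range_succ (fun i => S i * H i) N
  rw [h0] at h1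
  rw [hN] at h2
  simp only [zero_mul, add_zero] at h1 h2
  linarith [h1, h2]

lemma sbp (N : ℕ) (X S : ℕ → ℝ) (hX : ∀ i, X i = S (i + 1) - S i)
    (h0 : S 0 = 0) (hN : S N = 0) :
    ∑ i ∈ range N, ∑ j ∈ range N, X i * X j * G ((i : ℤ) - j)
      = ∑ k ∈ range N, ∑ l ∈ range N, S k * S l * R k l := by
  -- the four shifted sums
  have E11 : ∑ i ∈ range N, ∑ j ∈ range N, S (i + 1) * S (j + 1) * G ((i : ℤ) - j)
      = ∑ i ∈ range N, ∑ j ∈ range N, S i * S j * G ((i : ℤ) - j) := by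
    have step1 : ∀ i : ℕ, ∑ j ∈ range N, S (i + 1) * S (j + 1) * G ((i : ℤ) - j)
        = ∑ j ∈ range N, S (i + 1) * S j * G ((i : ℤ) + 1 - j) := by
      intro i
      have := shiftlem (S := S) (N := N) (fun y => S (i + 1) * G ((i : ℤ) + 1 - y)) h0 hN
      calc ∑ j ∈ range N, S (i + 1) * S (j + 1) * G ((i : ℤ) - j)
          = ∑ j ∈ range N, S (j + 1) * (S (i + 1) * G ((i : ℤ) + 1 - ((j : ℕ) + 1 : ℕ))) := by
            refine Finset.sum_congr rfl fun j _ => ?_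
            have : ((i : ℤ) + 1 - ((j : ℕ) + 1 : ℕ)) = (i : ℤ) - j := by push_cast; ring
            rw [this]; ring
        _ = ∑ j ∈ range N, S j * (S (i + 1) * G ((i : ℤ) + 1 - j)) := this
        _ = ∑ j ∈ range N, S (i + 1) * S j * G ((i : ℤ) + 1 - j) := by
            refine Finset.sum_congr rfl fun j _ => by ring
    rw [Finset.sum_congr rfl (fun i _ => step1 i), Finset.sum_comm]
    have step2 : ∀ j : ℕ, ∑ i ∈ range N, S (i + 1) * S j * G ((i : ℤ) + 1 - j)
        = ∑ i ∈ range N, S i * S j * G ((i : ℤ) - j) := by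
      intro j
      have := shiftlem (S := S) (N := N) (fun y => S j * G ((y : ℤ) - j)) h0 hN
      calc ∑ i ∈ range N, S (i + 1) * S j * G ((i : ℤ) + 1 - j)
          = ∑ i ∈ range N, S (i + 1) * (S j * G ((((i : ℕ) + 1 : ℕ) : ℤ) - j)) := by
            refine Finset.sum_congr rfl fun i _ => ?_
            have : ((((i : ℕ) + 1 : ℕ) : ℤ) - j) = (i : ℤ) + 1 - j := by push_cast; ring
            rw [this]; ring
        _ = ∑ i ∈ range N, S i * (S j * G ((i : ℤ) - j)) := this
        _ = ∑ i ∈ range N, S i * S j * G ((i : ℤ) - j) := by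
            refine Finset.sum_congr rfl fun i _ => by ring
    rw [Finset.sum_congr rfl (fun j _ => step2 j), Finset.sum_comm]
  have E10 : ∑ i ∈ range N, ∑ j ∈ range N, S (i + 1) * S j * G ((i : ℤ) - j)
      = ∑ i ∈ range N, ∑ j ∈ range N, S i * S j * G ((i : ℤ) - j - 1) := by
    rw [Finset.sum_comm]
    have step : ∀ j : ℕ, ∑ i ∈ range N, S (i + 1) * S j * G ((i : ℤ) - j)
        = ∑ i ∈ range N, S i * S j * G ((i : ℤ) - j - 1) := by
      intro j
      have := shiftlem (S := S) (N := N) (fun y => S j * G ((y : ℤ) - j - 1)) h0 hN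
      calc ∑ i ∈ range N, S (i + 1) * S j * G ((i : ℤ) - j)
          = ∑ i ∈ range N, S (i + 1) * (S j * G ((((i : ℕ) + 1 : ℕ) : ℤ) - j - 1)) := by
            refine Finset.sum_congr rfl fun i _ => ?_
            have : ((((i : ℕ) + 1 : ℕ) : ℤ) - j - 1) = (i : ℤ) - j := by push_cast; ring
            rw [this]; ring
        _ = ∑ i ∈ range N, S i * (S j * G ((i : ℤ) - j - 1)) := this
        _ = ∑ i ∈ range N, S i * S j * G ((i : ℤ) - j - 1) := by
            refine Finset.sum_congr rfl fun i _ => by ring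
    rw [Finset.sum_congr rfl (fun j _ => step j), Finset.sum_comm]
  have E01 : ∑ i ∈ range N, ∑ j ∈ range N, S i * S (j + 1) * G ((i : ℤ) - j)
      = ∑ i ∈ range N, ∑ j ∈ range N, S i * S j * G ((i : ℤ) - j + 1) := by
    refine Finset.sum_congr rfl fun i _ => ?_
    have := shiftlem (S := S) (N := N) (fun y => S i * G ((i : ℤ) - y + 1)) h0 hN
    calc ∑ j ∈ range N, S i * S (j + 1) * G ((i : ℤ) - j)
        = ∑ j ∈ range N, S (j + 1) * (S i * G ((i : ℤ) - ((j : ℕ) + 1 : ℕ) + 1)) := by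
          refine Finset.sum_congr rfl fun j _ => ?_
          have : ((i : ℤ) - ((j : ℕ) + 1 : ℕ) + 1) = (i : ℤ) - j := by push_cast; ring
          rw [this]; ring
      _ = ∑ j ∈ range N, S j * (S i * G ((i : ℤ) - j + 1)) := this
      _ = ∑ j ∈ range N, S i * S j * G ((i : ℤ) - j + 1) := by
          refine Finset.sum_congr rfl fun j _ => by ring
  have expand : ∑ i ∈ range N, ∑ j ∈ range N, X i * X j * G ((i : ℤ) - j)
      = ∑ i ∈ range N, ∑ j ∈ range N, S (i + 1) * S (j + 1) * G ((i : ℤ) - j)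
        - ∑ i ∈ range N, ∑ j ∈ range N, S (i + 1) * S j * G ((i : ℤ) - j)
        - ∑ i ∈ range N, ∑ j ∈ range N, S i * S (j + 1) * G ((i : ℤ) - j)
        + ∑ i ∈ range N, ∑ j ∈ range N, S i * S j * G ((i : ℤ) - j) := by
    rw [← Finset.sum_sub_distrib, ← Finset.sum_sub_distrib, ← Finset.sum_add_distrib]
    refine Finset.sum_congr rfl fun i _ => ?_
    rw [← Finset.sum_sub_distrib, ← Finset.sum_sub_distrib, ← Finset.sum_add_distrib]
    refine Finset.sum_congr rfl fun j _ => ?_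
    rw [hX i, hX j]
    ring
  rw [expand, E11, E10, E01]
  rw [← Finset.sum_sub_distrib, ← Finset.sum_sub_distrib, ← Finset.sum_add_distrib]
  refine Finset.sum_congr rfl fun i _ => ?_
  rw [← Finset.sum_sub_distrib, ← Finset.sum_sub_distrib, ← Finset.sum_add_distrib]
  refine Finset.sum_congr rfl fun j _ => ?_
  rw [R]
  ring



lemma cnd {N : ℕ} (x : Fin N → ℝ) (hsum : ∑ i, x i = 0) (hx : x ≠ 0) :
    ∑ i, ∑ j, x i * x j * Real.log (1 + |(i.1 : ℝ) - (j.1 : ℝ)|) < 0 := by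
  classical
  set X : ℕ → ℝ := fun m => if h : m < N then x ⟨m, h⟩ else 0 with hXdef
  set S : ℕ → ℝ := fun k => ∑ i ∈ range k, X i with hSdef
  have hXx : ∀ i : Fin N, X i.1 = x i := by
    intro i
    simp only [hXdef, dif_pos i.isLt, Fin.eta]
  have hXS : ∀ i, X i = S (i + 1) - S i := by
    intro i
    simp [hSdef, Finset.sum_range_succ]
  have hS0 : S 0 = 0 := by simp [hSdef]
  have hSN : S N = 0 := by
    have h1 := Fin.sum_univ_eq_sum_range X N
    have h2 : ∑ i : Fin N, X i.1 = ∑ i : Fin N, x i := Finset.sum_congr rfl fun i _ => hXx i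
    simp only [hSdef]
    rw [← h1, h2, hsum]
  have hQ : (∑ i, ∑ j, x i * x j * Real.log (1 + |(i.1 : ℝ) - (j.1 : ℝ)|))
      = ∑ i ∈ range N, ∑ j ∈ range N, X i * X j * G ((i : ℤ) - j) := by
    rw [← Fin.sum_univ_eq_sum_range (fun m => ∑ j ∈ range N, X m * X j * G ((m : ℤ) - j)) N]
    refine Finset.sum_congr rfl fun i _ => ?_
    rw [← Fin.sum_univ_eq_sum_range (fun m => X i.1 * X m * G ((i.1 : ℤ) - m)) N]
    refine Finset.sum_congr rfl fun j _ => ?_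
    rw [hXx i, hXx j]
    congr 1
    simp only [G]
    congr 1
    push_cast
    ring
  obtain ⟨k0, hk0N, hk0⟩ : ∃ k, k < N ∧ S k ≠ 0 := by
    by_contra h
    push_neg at h
    apply hx
    funext i
    have h1 : X i.1 = x i := hXx i
    have h2 : S i.1 = 0 := h i.1 i.isLt
    have h3 : S (i.1 + 1) = 0 := by
      rcases Nat.lt_or_ge (i.1 + 1) N with hlt | hge
      · exact h _ hlt
      · have : i.1 + 1 = N := by omega
        rw [this, hSN]
    have := hXS i.1
    rw [h2, h3] at this
    rw [← h1, this]
    simp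
  rw [hQ, sbp N X S hXS hS0 hSN]
  exact key N S k0 hk0N hk0


end Stmt2Aux

open scoped Classical
open Matrix in
theorem stmt_2 (n : ℕ) (hn : 1 ≤ n)
    (M : Matrix (Fin (n + 1)) (Fin (n + 1)) ℝ)
    (hM : M = Matrix.of fun i j => Real.log (1 + |(i.1 : ℝ) - (j.1 : ℝ)|))
    (hHerm : M.IsHermitian) :
    (Finset.univ.filter fun i => 0 < hHerm.eigenvalues i).card = 1 ∧
    (Finset.univ.filter fun i => hHerm.eigenvalues i < 0).card = n ∧
    ∀ i, hHerm.eigenvalues i ≠ 0 := by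
  classical
  set lam := hHerm.eigenvalues with hlam
  set U : Matrix (Fin (n + 1)) (Fin (n + 1)) ℝ :=
    (hHerm.eigenvectorUnitary : Matrix (Fin (n + 1)) (Fin (n + 1)) ℝ) with hUdef
  have hUU : U * star U = 1 := (Matrix.mem_unitaryGroup_iff).mp hHerm.eigenvectorUnitary.2
  have hsUU : star U * U = 1 := mul_eq_one_comm.mp hUU
  have hretr : ∀ c : Fin (n + 1) → ℝ, star U *ᵥ (U *ᵥ c) = c := by
    intro c
    rw [Matrix.mulVec_mulVec, hsUU, Matrix.one_mulVec]
  have hquad : ∀ x : Fin (n + 1) → ℝ,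
      x ⬝ᵥ M *ᵥ x = ∑ i, lam i * ((star U *ᵥ x) i) ^ 2 := by
    intro x
    conv_lhs => rw [hHerm.spectral_theorem, Unitary.conjStarAlgAut_apply]
    rw [← Matrix.mulVec_mulVec, ← Matrix.mulVec_mulVec, Matrix.dotProduct_mulVec]
    have hvm : x ᵥ* U = star U *ᵥ x := by
      rw [Matrix.star_eq_conjTranspose, Matrix.conjTranspose_eq_transpose_of_trivial,
        Matrix.mulVec_transpose]
    rw [hvm, dotProduct]
    refine Finset.sum_congr rfl fun i _ => ?_
    rw [Matrix.mulVec_diagonal]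
    simp only [Function.comp_apply, RCLike.ofReal_real_eq_id, id_eq]
    ring
  have hquadform : ∀ x : Fin (n + 1) → ℝ,
      x ⬝ᵥ M *ᵥ x = ∑ i, ∑ j, x i * x j * Real.log (1 + |(i.1 : ℝ) - (j.1 : ℝ)|) := by
    intro x
    simp only [dotProduct, Matrix.mulVec, Finset.mul_sum]
    refine Finset.sum_congr rfl fun i _ => Finset.sum_congr rfl fun j _ => ?_
    rw [hM]
    simp only [Matrix.of_apply, dotProduct]
    ring
  have main : ∀ c : Fin (n + 1) → ℝ, c ≠ 0 → (∀ k, c k ≠ 0 → 0 ≤ lam k) →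
      (∑ m, (U *ᵥ c) m = 0) → False := by
    intro c hc hpos hsumc
    have hxne : U *ᵥ c ≠ 0 := by
      intro h
      apply hc
      have h2 := hretr c
      rw [h, Matrix.mulVec_zero] at h2
      exact h2.symm
    have h1 := Stmt2Aux.cnd (U *ᵥ c) hsumc hxne
    have h2 : (U *ᵥ c) ⬝ᵥ M *ᵥ (U *ᵥ c) = ∑ i, lam i * c i ^ 2 := by
      rw [hquad, hretr]
    have h3 : 0 ≤ ∑ i, lam i * c i ^ 2 := by
      refine Finset.sum_nonneg fun i _ => ?_
      by_cases h : c i = 0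
      · simp [h]
      · exact mul_nonneg (hpos i h) (sq_nonneg _)
    rw [hquadform] at h2
    linarith
  have hex : ∃ i, 0 < lam i := by
    by_contra h
    push_neg at h
    set L : Fin (n + 1) := ⟨n, by omega⟩ with hL
    set x : Fin (n + 1) → ℝ := Pi.single (0 : Fin (n + 1)) 1 + Pi.single L 1 with hx
    have hval : x ⬝ᵥ M *ᵥ x = 2 * Real.log (1 + n) := by
      simp only [hx, Matrix.mulVec_add, Matrix.mulVec_single_one, add_dotProduct,
        single_dotProduct, Matrix.col_apply, one_mul, Pi.add_apply, mul_one, hM, Matrix.of_apply]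
      have e0 : ((0 : Fin (n + 1)).1 : ℝ) = 0 := by norm_num
      have eL : ((L : Fin (n + 1)).1 : ℝ) = n := by rw [hL]
      rw [e0, eL]
      have a1 : |(0 : ℝ) - 0| = 0 := by norm_num
      have a2 : |(0 : ℝ) - n| = n := by
        rw [zero_sub, abs_neg, abs_of_nonneg (Nat.cast_nonneg n)]
      have a3 : |(n : ℝ) - 0| = n := by
        rw [sub_zero, abs_of_nonneg (Nat.cast_nonneg n)]
      have a4 : |(n : ℝ) - n| = 0 := by norm_num
      rw [a1, a2, a3, a4]
      norm_num
      ring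
    have hpos2 : 0 < x ⬝ᵥ M *ᵥ x := by
      rw [hval]
      have : (1 : ℝ) < 1 + n := by
        have : (1 : ℝ) ≤ n := by exact_mod_cast hn
        linarith
      have := Real.log_pos this
      linarith
    have hle : x ⬝ᵥ M *ᵥ x ≤ 0 := by
      rw [hquad]
      refine Finset.sum_nonpos fun i _ => ?_
      exact mul_nonpos_of_nonpos_of_nonneg (h i) (sq_nonneg _)
    linarith
  obtain ⟨i0, hi0⟩ := hex
  have huniq : ∀ i, 0 ≤ lam i → i = i0 := by
    intro i hi
    by_contra hne
    set p := ∑ m, U m i with hp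
    set q := ∑ m, U m i0 with hq
    by_cases hp0 : p = 0
    · refine main (Pi.single i 1) ?_ ?_ ?_
      · intro h
        have := congrFun h i
        simp at this
      · intro k hk
        by_cases hk2 : k = i
        · rw [hk2]; exact hi
        · exfalso; exact hk (Pi.single_eq_of_ne hk2 1)
      · simp only [Matrix.mulVec_single_one, Matrix.col_apply]
        exact hp0
    by_cases hq0 : q = 0
    · refine main (Pi.single i0 1) ?_ ?_ ?_
      · intro h
        have := congrFun h i0
        simp at this
      · intro k hk
        by_cases hk2 : k = i0
        · rw [hk2]; exact hi0.le
        · exfalso; exact hk (Pi.single_eq_of_ne hk2 1)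
      · simp only [Matrix.mulVec_single_one, Matrix.col_apply]
        exact hq0
    · refine main (Pi.single i q - Pi.single i0 p) ?_ ?_ ?_
      · intro h
        have := congrFun h i
        simp only [Pi.sub_apply, Pi.single_eq_same, Pi.zero_apply] at this
        have h2 := Pi.single_eq_of_ne (M := fun _ : Fin (n + 1) => ℝ) hne p
        rw [h2] at this
        exact hq0 (by linarith)
      · intro k hk
        by_cases hk1 : k = i
        · rw [hk1]; exact hi
        by_cases hk2 : k = i0
        · rw [hk2]; exact hi0.le
        · exfalso
          apply hk
          simp [Pi.sub_apply, Pi.single_eq_of_ne hk1, Pi.single_eq_of_ne hk2]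
      · simp only [Matrix.mulVec_sub, Matrix.mulVec_single, Pi.sub_apply,
          Finset.sum_sub_distrib, Matrix.col_apply, Pi.smul_apply, op_smul_eq_mul, ← Finset.sum_mul]
        rw [← hp, ← hq]
        ring
  have hne0 : ∀ i, lam i ≠ 0 := by
    intro i h
    have hii := huniq i (le_of_eq h.symm)
    rw [hii] at h
    rw [h] at hi0
    exact lt_irrefl 0 hi0
  have hposset : (Finset.univ.filter fun i => 0 < lam i) = {i0} := by
    ext i
    simp only [Finset.mem_filter, Finset.mem_univ, true_and, Finset.mem_singleton]
    constructor
    · intro h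
      exact huniq i h.le
    · intro h
      rw [h]
      exact hi0
  have hnegset : (Finset.univ.filter fun i => lam i < 0) = Finset.univ.erase i0 := by
    ext i
    simp only [Finset.mem_filter, Finset.mem_univ, true_and, Finset.mem_erase, and_true]
    constructor
    · intro h hcon
      rw [hcon] at h
      exact absurd hi0 (by linarith)
    · intro h
      rcases lt_trichotomy (lam i) 0 with h1 | h1 | h1
      · exact h1
      · exact absurd h1 (hne0 i)
      · exact absurd (huniq i h1.le) h
  refine ⟨?_, ?_, hne0⟩
  · rw [hposset, Finset.card_singleton]
  · rw [hnegset, Finset.card_erase_of_mem (Finset.mem_univ i0), Finset.card_univ,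
      Fintype.card_fin]
    omega
end

section
/- Let H : [0,∞) → ℝ be Lebesgue integrable with t ↦ (H(t) - H(0))/t bounded on some interval (0,ε). Then for every s ∈ ℂ with Re(s) ≥ 0, the integral ∫_0^∞ ( H(0) e^{-t}/t - H(t) e^{-st}/(1 - e^{-t}) ) dt converges absolutely, and the resulting function ψ_H(s) is holomorphic on Re(s) > 0 and continuous on Re(s) ≥ 0. -/
open MeasureTheory Set

/-- The integrand of the integral defining `ψ_H(s)`. -/
noncomputable def psiIntegrand (H : ℝ → ℝ) (s : ℂ) (t : ℝ) : ℂ :=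
  ((H 0 * Real.exp (-t) / t : ℝ) : ℂ) -
    (H t : ℂ) * Complex.exp (-s * t) / ((1 : ℂ) - (Real.exp (-t) : ℂ))

/-- The function `ψ_H`. -/
noncomputable def psiH (H : ℝ → ℝ) (s : ℂ) : ℂ :=
  ∫ t in Ioi (0 : ℝ), psiIntegrand H s t

lemma one_sub_exp_pos {t : ℝ} (ht : 0 < t) : 0 < 1 - Real.exp (-t) := by
  have : Real.exp (-t) < 1 := Real.exp_lt_one_iff.mpr (by linarith)
  linarith

lemma t_le_exp_mul {t : ℝ} (ht : 0 < t) (ht1 : t ≤ 1) :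
    t ≤ Real.exp 1 * (1 - Real.exp (-t)) := by
  have h1 : t * Real.exp (-t) ≤ 1 - Real.exp (-t) := by
    have := Real.add_one_le_exp t
    have he : 0 < Real.exp (-t) := Real.exp_pos _
    have : (t + 1) * Real.exp (-t) ≤ Real.exp t * Real.exp (-t) := by nlinarith
    rw [← Real.exp_add] at this
    simp at this
    nlinarith
  have h2 : Real.exp (-1 : ℝ) ≤ Real.exp (-t) := Real.exp_le_exp.mpr (by linarith)
  have h3 : Real.exp (1:ℝ) * Real.exp (-1:ℝ) = 1 := by
    rw [← Real.exp_add]; simp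
  have he1 : 0 < Real.exp (1:ℝ) := Real.exp_pos _
  have h4 : t * Real.exp (-1:ℝ) ≤ 1 - Real.exp (-t) :=
    le_trans (by nlinarith) h1
  nlinarith [mul_le_mul_of_nonneg_left h4 he1.le]

lemma sub_one_sub_exp_nonneg {t : ℝ} (ht : 0 ≤ t) : 0 ≤ t - (1 - Real.exp (-t)) := by
  have := Real.add_one_le_exp (-t)
  linarith

lemma sub_one_sub_exp_le {t : ℝ} (ht : 0 ≤ t) : t - (1 - Real.exp (-t)) ≤ t ^ 2 := by
  have h1 : Real.exp (-t) * (1 + t) ≤ 1 := by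
    have := Real.add_one_le_exp t
    have he : 0 < Real.exp (-t) := Real.exp_pos _
    have h3 : Real.exp t * Real.exp (-t) = 1 := by rw [← Real.exp_add]; simp
    nlinarith
  nlinarith [Real.exp_pos (-t)]

lemma inv_diff_le {t : ℝ} (ht : 0 < t) (ht1 : t ≤ 1) :
    |1/t - 1/(1 - Real.exp (-t))| ≤ 3 := by
  have hu := one_sub_exp_pos ht
  have h1 := sub_one_sub_exp_nonneg ht.le
  have h2 := sub_one_sub_exp_le ht.le
  have h3 := t_le_exp_mul ht ht1
  have he : Real.exp 1 ≤ 3 := by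
    have := Real.exp_one_lt_d9; linarith
  have key : 1/(1 - Real.exp (-t)) - 1/t = (t - (1 - Real.exp (-t))) / (t * (1 - Real.exp (-t))) := by
    field_simp
  rw [abs_sub_comm, key, abs_of_nonneg (by positivity)]
  rw [div_le_iff₀ (by positivity)]
  -- t - (1-e^{-t}) ≤ t^2 ≤ 3 * (t * (1-e^{-t}))  since t ≤ e(1-e^{-t}) ≤ 3(1-e^{-t})
  have : t ≤ 3 * (1 - Real.exp (-t)) := by nlinarith
  nlinarith

noncomputable def pdelta (ε R : ℝ) : ℝ := min (min ε 1) (1/(R+1)) / 2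

noncomputable def pK (H : ℝ → ℝ) (C R : ℝ) : ℝ := |H 0| * (2*(R+1) + 3) + 3*C

noncomputable def pG (H : ℝ → ℝ) (ε C R t : ℝ) : ℝ :=
  Set.indicator (Ioc 0 (pdelta ε R)) (fun _ => pK H C R) t
    + (|H 0| * Real.exp (-t) / pdelta ε R + |H t| / (1 - Real.exp (-(pdelta ε R))))

lemma pdelta_pos {ε R : ℝ} (hε : 0 < ε) (hR : 0 ≤ R) : 0 < pdelta ε R := by
  unfold pdelta
  have : (0:ℝ) < 1/(R+1) := by positivity
  positivity

lemma pdelta_lt_eps {ε R : ℝ} (hε : 0 < ε) : pdelta ε R < ε := by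
  unfold pdelta
  have h : min (min ε 1) (1/(R+1)) ≤ ε := le_trans (min_le_left _ _) (min_le_left _ _)
  linarith

lemma pdelta_le_one {ε R : ℝ} : pdelta ε R ≤ 1/2 := by
  unfold pdelta
  have h : min (min ε 1) (1/(R+1)) ≤ 1 := le_trans (min_le_left _ _) (min_le_right _ _)
  linarith

lemma pdelta_le_inv {ε R : ℝ} (hε : 0 < ε) (hR : 0 ≤ R) : pdelta ε R ≤ 1/(R+1) := by
  unfold pdelta
  have h0 : min (min ε 1) (1/(R+1)) ≤ 1/(R+1) := min_le_right _ _
  have h1 : 0 < min (min ε 1) (1/(R+1)) := by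
    apply lt_min (lt_min hε one_pos)
    positivity
  linarith

lemma exp_neg_st_abs_le {s : ℂ} (hs : 0 ≤ s.re) {t : ℝ} (ht : 0 ≤ t) :
    ‖Complex.exp (-s * t)‖ ≤ 1 := by
  rw [Complex.norm_exp]
  rw [Real.exp_le_one_iff]
  have : (-s * (t:ℂ)).re = -(s.re * t) := by simp [Complex.mul_re]
  rw [this]
  nlinarith [mul_nonneg hs ht]

lemma t_le_three_mul {t : ℝ} (ht : 0 < t) (ht1 : t ≤ 1) :
    t ≤ 3 * (1 - Real.exp (-t)) := by
  have h3 := t_le_exp_mul ht ht1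
  have he : Real.exp 1 ≤ 3 := by have := Real.exp_one_lt_d9; linarith
  have := one_sub_exp_pos ht
  nlinarith

lemma psi_norm_le (H : ℝ → ℝ) {ε C : ℝ} (hε : 0 < ε)
    (hC : ∀ t ∈ Ioo (0:ℝ) ε, |(H t - H 0) / t| ≤ C) {R : ℝ} (hR : 0 ≤ R)
    {s : ℂ} (hs : 0 ≤ s.re) (hsR : ‖s‖ ≤ R) {t : ℝ} (ht : 0 < t) :
    ‖psiIntegrand H s t‖ ≤ pG H ε C R t := by
  have hδ : 0 < pdelta ε R := pdelta_pos hε hR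
  have hden := one_sub_exp_pos ht
  have hdenδ := one_sub_exp_pos hδ
  have habsA := exp_neg_st_abs_le hs ht.le
  rcases le_or_gt t (pdelta ε R) with hcase | hcase
  · -- small t
    have ht1 : t ≤ 1 := hcase.trans (pdelta_le_one.trans (by norm_num))
    have hrest : 0 ≤ |H 0| * Real.exp (-t) / pdelta ε R
        + |H t| / (1 - Real.exp (-(pdelta ε R))) := by positivity
    have hmem : t ∈ Ioc 0 (pdelta ε R) := ⟨ht, hcase⟩
    have hind : Set.indicator (Ioc 0 (pdelta ε R)) (fun _ => pK H C R) t = pK H C R :=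
      Set.indicator_of_mem hmem _
    rw [pG, hind]
    refine le_trans ?_ (le_add_of_nonneg_right hrest)
    -- decomposition
    set A := Complex.exp (-s * t) with hA
    set X := Complex.exp ((s - 1) * t) with hX
    have e1 : A * X = Complex.exp (-(t:ℂ)) := by
      rw [hA, hX, ← Complex.exp_add]
      congr 1
      ring
    have hid : psiIntegrand H s t =
        (H 0 : ℂ) * (A * (X - 1)) / t
        + (H 0 : ℂ) * A * ((1/(t:ℂ)) - 1/((1:ℂ) - (Real.exp (-t):ℂ)))
        + ((H 0 : ℂ) - (H t : ℂ)) * A / ((1:ℂ) - (Real.exp (-t):ℂ)) := by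
      rw [psiIntegrand]
      push_cast
      linear_combination (-(H 0 : ℂ)/(t:ℂ)) * e1
    rw [hid]
    have hXb : ‖X - 1‖ ≤ 2 * ((R+1) * t) := by
      have habs1 : ‖(s - 1) * t‖ ≤ (R+1) * t := by
        rw [norm_mul, Complex.norm_real, Real.norm_eq_abs, abs_of_pos ht]
        gcongr
        calc ‖s - 1‖ = ‖s - 1‖ := rfl
          _ ≤ ‖s‖ + ‖(1:ℂ)‖ := norm_sub_le _ _
          _ = ‖s‖ + 1 := by simp
          _ ≤ R + 1 := by linarith
      have hle1 : ‖(s - 1) * t‖ ≤ 1 := by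
        refine habs1.trans ?_
        have h2 : t ≤ 1/(R+1) := hcase.trans (pdelta_le_inv hε hR)
        rw [le_div_iff₀ (by linarith)] at h2
        linarith [h2]
      have := Complex.norm_exp_sub_one_le hle1
      calc ‖X - 1‖ ≤ 2 * ‖(s-1)*t‖ := this
        _ ≤ 2 * ((R+1)*t) := by linarith
    have hterm1 : ‖(H 0 : ℂ) * (A * (X - 1)) / (t:ℂ)‖ ≤ |H 0| * (2*(R+1)) := by
      rw [norm_div, norm_mul, norm_mul, Complex.norm_real, Real.norm_eq_abs,
        Complex.norm_real, Real.norm_eq_abs, abs_of_pos ht]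
      rw [div_le_iff₀ ht]
      calc |H 0| * (‖A‖ * ‖X - 1‖)
          ≤ |H 0| * (1 * (2 * ((R+1)*t))) := by
            gcongr
        _ = |H 0| * (2*(R+1)) * t := by ring
    have hterm2 : ‖(H 0 : ℂ) * A * ((1/(t:ℂ)) - 1/((1:ℂ) - (Real.exp (-t):ℂ)))‖
        ≤ |H 0| * 3 := by
      have hcast : (1/(t:ℂ)) - 1/((1:ℂ) - (Real.exp (-t):ℂ))
          = ((1/t - 1/(1 - Real.exp (-t)) : ℝ) : ℂ) := by push_cast; ring
      rw [hcast, norm_mul, norm_mul, Complex.norm_real, Real.norm_eq_abs, Complex.norm_real, Real.norm_eq_abs]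
      calc |H 0| * ‖A‖ * |1/t - 1/(1 - Real.exp (-t))|
          ≤ |H 0| * 1 * 3 := by
            gcongr
            exact inv_diff_le ht ht1
        _ = |H 0| * 3 := by ring
    have hterm3 : ‖((H 0 : ℂ) - (H t : ℂ)) * A / ((1:ℂ) - (Real.exp (-t):ℂ))‖ ≤ 3 * C := by
      have hcast : ((1:ℂ) - (Real.exp (-t):ℂ)) = ((1 - Real.exp (-t) : ℝ) : ℂ) := by push_cast; ring
      have hcast2 : ((H 0 : ℂ) - (H t : ℂ)) = ((H 0 - H t : ℝ) : ℂ) := by push_cast; ring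
      rw [hcast, hcast2, norm_div, norm_mul, Complex.norm_real, Real.norm_eq_abs,
        Complex.norm_real, Real.norm_eq_abs, abs_of_pos hden]
      have hCt : |H t - H 0| ≤ C * t := by
        have := hC t ⟨ht, lt_of_le_of_lt hcase (pdelta_lt_eps hε)⟩
        rw [abs_div, abs_of_pos ht, div_le_iff₀ ht] at this
        linarith
      have h3 := t_le_three_mul ht ht1
      rw [div_le_iff₀ hden]
      calc |H 0 - H t| * ‖A‖ ≤ |H t - H 0| * 1 := by
            rw [abs_sub_comm (H 0)]
            exact mul_le_mul_of_nonneg_left habsA (abs_nonneg _)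
        _ ≤ C * t := by rw [mul_one]; exact hCt
        _ ≤ C * (3 * (1 - Real.exp (-t))) := by
            have hC0 : 0 ≤ C := le_trans (abs_nonneg _) (hC (ε/2) ⟨by linarith, by linarith⟩)
            gcongr
        _ = 3 * C * (1 - Real.exp (-t)) := by ring
    refine le_trans norm_add₃_le ?_
    have hpk : |H 0| * (2*(R+1)) + |H 0| * 3 + 3 * C = pK H C R := by rw [pK]; ring
    linarith [hterm1, hterm2, hterm3]
  · -- large t
    have hind : Set.indicator (Ioc 0 (pdelta ε R)) (fun _ => pK H C R) t = 0 :=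
      Set.indicator_of_notMem (fun h => absurd h.2 (not_le.mpr hcase)) _
    rw [pG, hind, zero_add]
    refine le_trans (norm_sub_le _ _) ?_
    gcongr
    · -- ‖((H 0 * exp(-t)/t : ℝ):ℂ)‖ ≤ |H 0| * exp (-t) / pdelta
      rw [Complex.norm_real, Real.norm_eq_abs, abs_div, abs_mul, abs_of_pos (Real.exp_pos _),
        abs_of_pos ht, div_le_div_iff₀ ht hδ]
      have : Real.exp (-t) * pdelta ε R ≤ Real.exp (-t) * t :=
        mul_le_mul_of_nonneg_left hcase.le (Real.exp_pos _).le
      nlinarith [abs_nonneg (H 0), Real.exp_pos (-t)]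
    · rw [norm_div, norm_mul, Complex.norm_real, Real.norm_eq_abs]
      have hcast : ‖(1:ℂ) - (Real.exp (-t):ℂ)‖ = 1 - Real.exp (-t) := by
        rw [show ((1:ℂ) - (Real.exp (-t):ℂ)) = ((1 - Real.exp (-t) : ℝ) : ℂ) by push_cast; ring,
          Complex.norm_real, Real.norm_eq_abs, abs_of_pos hden]
      rw [hcast, div_le_div_iff₀ hden hdenδ]
      have hmono : 1 - Real.exp (-(pdelta ε R)) ≤ 1 - Real.exp (-t) := by
        have : Real.exp (-t) ≤ Real.exp (-(pdelta ε R)) := Real.exp_le_exp.mpr (by linarith)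
        linarith
      calc |H t| * ‖Complex.exp (-s * (t:ℂ))‖ * (1 - Real.exp (-(pdelta ε R)))
          ≤ |H t| * 1 * (1 - Real.exp (-t)) := by
            gcongr
        _ = |H t| * (1 - Real.exp (-t)) := by ring

lemma psi_meas (H : ℝ → ℝ) (hInt : IntegrableOn H (Ici 0)) (s : ℂ) :
    AEStronglyMeasurable (psiIntegrand H s) (volume.restrict (Ioi (0:ℝ))) := by
  have hH : AEStronglyMeasurable H (volume.restrict (Ioi (0:ℝ))) :=
    hInt.1.mono_measure (Measure.restrict_mono Ioi_subset_Ici_self le_rfl)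
  have c1 : Continuous fun t : ℝ => Complex.exp (-s * t) :=
    Complex.continuous_exp.comp (continuous_const.mul Complex.continuous_ofReal)
  have c2 : Continuous fun t : ℝ => (1:ℂ) - (Real.exp (-t) : ℂ) :=
    continuous_const.sub (Complex.continuous_ofReal.comp (Real.continuous_exp.comp continuous_neg))
  have m1 : Measurable fun t : ℝ => ((H 0 * Real.exp (-t) / t : ℝ) : ℂ) :=
    Complex.measurable_ofReal.comp
      ((measurable_const.mul (Real.measurable_exp.comp measurable_neg)).div measurable_id)
  have h1 : AEStronglyMeasurable (fun t : ℝ => ((H t : ℝ) : ℂ))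
      (volume.restrict (Ioi (0:ℝ))) := Complex.continuous_ofReal.comp_aestronglyMeasurable hH
  have h2 : AEStronglyMeasurable (fun t : ℝ => ((H t : ℝ) : ℂ) * Complex.exp (-s * t))
      (volume.restrict (Ioi (0:ℝ))) := h1.mul c1.aestronglyMeasurable
  have h3 : AEStronglyMeasurable
      (fun t : ℝ => ((H t : ℝ) : ℂ) * Complex.exp (-s * t) / ((1:ℂ) - (Real.exp (-t) : ℂ)))
      (volume.restrict (Ioi (0:ℝ))) := by
    have c2m : Measurable fun t : ℝ => (((1:ℂ) - (Real.exp (-t) : ℂ))⁻¹) :=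
      (c2.measurable).inv
    simpa [div_eq_mul_inv, Pi.mul_def] using h2.mul c2m.aestronglyMeasurable
  exact m1.aestronglyMeasurable.sub h3

lemma pG_integrable (H : ℝ → ℝ) (hInt : IntegrableOn H (Ici 0)) {ε C R : ℝ}
    (hε : 0 < ε) (hR : 0 ≤ R) : IntegrableOn (pG H ε C R) (Ioi 0) := by
  have hδ := pdelta_pos hε hR
  unfold pG
  apply Integrable.add
  · have h1 : Integrable (Set.indicator (Ioc 0 (pdelta ε R)) (fun _ => pK H C R)) volume := by
      rw [integrable_indicator_iff measurableSet_Ioc]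
      exact integrableOn_const measure_Ioc_lt_top.ne
    exact h1.integrableOn
  · apply Integrable.add
    · have h2 : IntegrableOn (fun t => Real.exp (-t)) (Ioi 0) := by
        simpa using exp_neg_integrableOn_Ioi 0 (one_pos)
      have := (h2.const_mul (|H 0|)).div_const (pdelta ε R)
      simpa [mul_comm, mul_div_assoc] using this
    · have h3 : IntegrableOn (fun t => |H t|) (Ioi 0) :=
        (hInt.mono_set Ioi_subset_Ici_self).norm
      exact h3.div_const _

lemma psi_integrableOn (H : ℝ → ℝ) (hInt : IntegrableOn H (Ici 0)) {ε C : ℝ} (hε : 0 < ε)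
    (hC : ∀ t ∈ Ioo (0:ℝ) ε, |(H t - H 0) / t| ≤ C) (s : ℂ) (hs : 0 ≤ s.re) :
    IntegrableOn (psiIntegrand H s) (Ioi 0) := by
  refine Integrable.mono'
    (pG_integrable H hInt (C := C) (R := ‖s‖) hε (norm_nonneg s))
    (psi_meas H hInt s) ?_
  filter_upwards [ae_restrict_mem measurableSet_Ioi] with t ht
  exact psi_norm_le H hε hC (norm_nonneg s) hs le_rfl ht

noncomputable def psiDeriv (H : ℝ → ℝ) (s : ℂ) (t : ℝ) : ℂ :=
  (H t : ℂ) * t * Complex.exp (-s * t) / ((1:ℂ) - (Real.exp (-t) : ℂ))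

lemma hasDerivAt_psiIntegrand (H : ℝ → ℝ) (s : ℂ) (t : ℝ) :
    HasDerivAt (fun z => psiIntegrand H z t) (psiDeriv H s t) s := by
  have h1 : HasDerivAt (fun z : ℂ => -z * (t:ℂ)) (-(t:ℂ)) s := by
    simpa using ((hasDerivAt_id s).neg.mul_const (t:ℂ))
  have h2 := h1.cexp
  have h3 := ((h2.const_mul ((H t : ℝ):ℂ)).div_const ((1:ℂ) - (Real.exp (-t):ℂ))).const_sub
      (((H 0 * Real.exp (-t) / t : ℝ) : ℂ))
  have heq : psiDeriv H s t
      = -((H t : ℂ) * (Complex.exp (-s * t) * -(t:ℂ)) / ((1:ℂ) - (Real.exp (-t):ℂ))) := by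
    unfold psiDeriv; ring
  rw [heq]
  exact h3

lemma psiDeriv_meas (H : ℝ → ℝ) (hInt : IntegrableOn H (Ici 0)) (s : ℂ) :
    AEStronglyMeasurable (psiDeriv H s) (volume.restrict (Ioi (0:ℝ))) := by
  have hH : AEStronglyMeasurable H (volume.restrict (Ioi (0:ℝ))) :=
    hInt.1.mono_measure (Measure.restrict_mono Ioi_subset_Ici_self le_rfl)
  have c1 : Continuous fun t : ℝ => (t : ℂ) * Complex.exp (-s * t) :=
    Complex.continuous_ofReal.mul
      (Complex.continuous_exp.comp (continuous_const.mul Complex.continuous_ofReal))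
  have c2m : Measurable fun t : ℝ => (((1:ℂ) - (Real.exp (-t) : ℂ))⁻¹) :=
    ((continuous_const.sub
      (Complex.continuous_ofReal.comp (Real.continuous_exp.comp continuous_neg))).measurable).inv
  have h1 : AEStronglyMeasurable (fun t : ℝ => ((H t : ℝ) : ℂ))
      (volume.restrict (Ioi (0:ℝ))) := Complex.continuous_ofReal.comp_aestronglyMeasurable hH
  have h2 : AEStronglyMeasurable (fun t : ℝ => ((H t : ℝ) : ℂ) * ((t:ℂ) * Complex.exp (-s * t)))
      (volume.restrict (Ioi (0:ℝ))) := h1.mul c1.aestronglyMeasurable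
  have h3 : AEStronglyMeasurable
      (fun t : ℝ => (((H t : ℝ) : ℂ) * ((t:ℂ) * Complex.exp (-s * t)))
        * (((1:ℂ) - (Real.exp (-t) : ℂ))⁻¹))
      (volume.restrict (Ioi (0:ℝ))) := h2.mul c2m.aestronglyMeasurable
  unfold psiDeriv
  simpa [div_eq_mul_inv, mul_assoc] using h3

lemma psiDeriv_norm_le (H : ℝ → ℝ) {σ : ℝ} (hσ : 0 < σ) {s : ℂ} (hs : σ/2 ≤ s.re)
    {t : ℝ} (ht : 0 < t) : ‖psiDeriv H s t‖ ≤ |H t| * (3 + 4/σ) := by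
  have hden := one_sub_exp_pos ht
  unfold psiDeriv
  rw [norm_div, norm_mul, norm_mul, Complex.norm_real, Real.norm_eq_abs, Complex.norm_real, Real.norm_eq_abs,
    abs_of_pos ht]
  have hcast : ‖(1:ℂ) - (Real.exp (-t):ℂ)‖ = 1 - Real.exp (-t) := by
    rw [show ((1:ℂ) - (Real.exp (-t):ℂ)) = ((1 - Real.exp (-t):ℝ):ℂ) by push_cast; ring,
      Complex.norm_real, Real.norm_eq_abs, abs_of_pos hden]
  have habs : ‖Complex.exp (-s * t)‖ = Real.exp (-(s.re * t)) := by
    rw [Complex.norm_exp]; congr 1; simp [Complex.mul_re]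
  rw [hcast, habs, div_le_iff₀ hden]
  have key : t * Real.exp (-(s.re * t)) ≤ (3 + 4/σ) * (1 - Real.exp (-t)) := by
    rcases le_or_gt t 1 with h1 | h1
    · have e1 : Real.exp (-(s.re*t)) ≤ 1 := Real.exp_le_one_iff.mpr (by nlinarith)
      have e2 := t_le_three_mul ht h1
      have e3 : 0 ≤ 4/σ := by positivity
      nlinarith [Real.exp_pos (-(s.re*t))]
    · have hhalf : (1:ℝ)/2 ≤ 1 - Real.exp (-t) := by
        have h2 : Real.exp (-t) ≤ Real.exp (-1:ℝ) := Real.exp_le_exp.mpr (by linarith)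
        have h3 : Real.exp (-1:ℝ) ≤ 1/2 := by
          rw [Real.exp_neg]
          rw [inv_le_comm₀ (Real.exp_pos 1) (by norm_num)]
          have := Real.exp_one_gt_d9
          linarith
        linarith
      have e4 : t * Real.exp (-(s.re*t)) ≤ 2/σ := by
        have e5 : Real.exp (-(s.re*t)) ≤ Real.exp (-(σ*t/2)) :=
          Real.exp_le_exp.mpr (by nlinarith)
        have h5 : σ*t/2 ≤ Real.exp (σ*t/2) := by linarith [Real.add_one_le_exp (σ*t/2)]
        have hpos : (0:ℝ) < σ*t/2 := by positivity
        have e6 : Real.exp (-(σ*t/2)) ≤ (σ*t/2)⁻¹ := by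
          rw [Real.exp_neg]
          exact inv_anti₀ hpos h5
        have e7 : t * (σ*t/2)⁻¹ = 2/σ := by field_simp
        calc t * Real.exp (-(s.re*t)) ≤ t * (σ*t/2)⁻¹ := by
              exact mul_le_mul_of_nonneg_left (e5.trans e6) ht.le
          _ = 2/σ := e7
      have e8 : (0:ℝ) < 1 - Real.exp (-t) := hden
      calc t * Real.exp (-(s.re*t)) ≤ 2/σ := e4
        _ = (4/σ) * (1/2) := by ring
        _ ≤ (4/σ) * (1 - Real.exp (-t)) := by
            have : (0:ℝ) ≤ 4/σ := by positivity
            exact mul_le_mul_of_nonneg_left hhalf this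
        _ ≤ (3 + 4/σ) * (1 - Real.exp (-t)) := by nlinarith
  calc |H t| * t * Real.exp (-(s.re * t)) = |H t| * (t * Real.exp (-(s.re * t))) := by ring
    _ ≤ |H t| * ((3 + 4/σ) * (1 - Real.exp (-t))) :=
        mul_le_mul_of_nonneg_left key (abs_nonneg _)
    _ = |H t| * (3 + 4/σ) * (1 - Real.exp (-t)) := by ring

theorem stmt_3 (H : ℝ → ℝ)
    (hInt : IntegrableOn H (Ici 0))
    (hbd : ∃ ε > (0 : ℝ), ∃ C : ℝ, ∀ t ∈ Ioo (0 : ℝ) ε, |(H t - H 0) / t| ≤ C) :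
    (∀ s : ℂ, 0 ≤ s.re → IntegrableOn (psiIntegrand H s) (Ioi 0)) ∧
    DifferentiableOn ℂ (psiH H) {s : ℂ | 0 < s.re} ∧
    ContinuousOn (psiH H) {s : ℂ | 0 ≤ s.re} := by
  obtain ⟨ε₀, hε₀, C, hC⟩ := hbd
  refine ⟨fun s hs => psi_integrableOn H hInt hε₀ hC s hs, ?_, ?_⟩
  · -- differentiable on right half-plane
    intro s₀ hs₀
    simp only [mem_setOf_eq] at hs₀
    have hbound_int : Integrable (fun t => |H t| * (3 + 4 / s₀.re))
        (volume.restrict (Ioi (0:ℝ))) :=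
      (hInt.mono_set Ioi_subset_Ici_self).norm.mul_const _
    have key := hasDerivAt_integral_of_dominated_loc_of_deriv_le
      (μ := volume.restrict (Ioi (0:ℝ)))
      (F := fun s t => psiIntegrand H s t) (F' := fun s t => psiDeriv H s t)
      (x₀ := s₀) (bound := fun t => |H t| * (3 + 4 / s₀.re))
      (Metric.ball_mem_nhds s₀ (half_pos hs₀))
      (Filter.Eventually.of_forall (psi_meas H hInt))
      (psi_integrableOn H hInt hε₀ hC s₀ hs₀.le)
      (psiDeriv_meas H hInt s₀)
      ?_ hbound_int ?_
    · exact key.2.differentiableAt.differentiableWithinAt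
    · filter_upwards [ae_restrict_mem measurableSet_Ioi] with t ht s hball
      have hre : s₀.re / 2 ≤ s.re := by
        have h1 : ‖s - s₀‖ < s₀.re / 2 := by
          rwa [Metric.mem_ball, Complex.dist_eq] at hball
        have h2 : |(s - s₀).re| ≤ ‖s - s₀‖ := Complex.abs_re_le_norm _
        have h3 : (s - s₀).re = s.re - s₀.re := by simp
        rw [h3] at h2
        have := abs_le.mp h2
        linarith [this.1]
      exact psiDeriv_norm_le H hs₀ hre ht
    · filter_upwards [ae_restrict_mem measurableSet_Ioi] with t ht s _
      exact hasDerivAt_psiIntegrand H s t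
  · -- continuous on closed right half-plane
    intro s₀ hs₀
    simp only [mem_setOf_eq] at hs₀
    set R : ℝ := ‖s₀‖ + 1 with hR
    have hRpos : (0:ℝ) ≤ R := by positivity
    apply continuousWithinAt_of_dominated (bound := pG H ε₀ C R)
    · exact Filter.Eventually.of_forall (psi_meas H hInt)
    · have h1 : ∀ᶠ s in nhdsWithin s₀ {s : ℂ | 0 ≤ s.re}, ‖s‖ ≤ R := by
        have hcb : Metric.closedBall s₀ 1 ∈ nhdsWithin s₀ {s : ℂ | 0 ≤ s.re} :=
          mem_nhdsWithin_of_mem_nhds (Metric.closedBall_mem_nhds s₀ one_pos)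
        filter_upwards [hcb] with s hscb
        rw [Metric.mem_closedBall, Complex.dist_eq] at hscb
        calc ‖s‖ = ‖s₀ + (s - s₀)‖ := by ring_nf
          _ ≤ ‖s₀‖ + ‖s - s₀‖ := norm_add_le _ _
          _ ≤ ‖s₀‖ + 1 := by linarith
      have h2 : ∀ᶠ s in nhdsWithin s₀ {s : ℂ | 0 ≤ s.re}, 0 ≤ s.re :=
        eventually_mem_nhdsWithin
      filter_upwards [h1, h2] with s hsR hsre
      filter_upwards [ae_restrict_mem measurableSet_Ioi] with t ht
      exact psi_norm_le H hε₀ hC hRpos hsre hsR ht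
    · exact pG_integrable H hInt hε₀ hRpos
    · filter_upwards [ae_restrict_mem measurableSet_Ioi] with t _
      have hc : Continuous fun s : ℂ => psiIntegrand H s t := by
        unfold psiIntegrand
        exact continuous_const.sub
          ((continuous_const.mul
            (Complex.continuous_exp.comp (continuous_id.neg.mul continuous_const))).div_const _)
      exact hc.continuousWithinAt
end

section
/- One has the formal power series identity −(1−z)^{-1} log(1−z) = (1−z)^{-1/2} ∑_{k≥0} 4^{-k} C(2k,k) (ψ(1/2 + k) − ψ(1/2)) z^k, where ψ is the digamma function and C(2k,k) the central binomial coefficient. -/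
/-- The digamma function `ψ = Γ'/Γ` on the reals. -/
noncomputable def digamma (x : ℝ) : ℝ :=
  deriv (fun y => Real.log (Real.Gamma y)) x

namespace Stmt15Aux
open Finset
noncomputable def aa (k : ℕ) : ℝ := (Nat.centralBinom k : ℝ) / 4 ^ k
lemma aa_pos (k : ℕ) : 0 < aa k := by
  have := Nat.centralBinom_pos k
  unfold aa
  positivity
lemma aa_zero : aa 0 = 1 := by simp [aa, Nat.centralBinom]
lemma aa_rec (k : ℕ) : ((k : ℝ) + 1) * aa (k + 1) = ((k : ℝ) + 1/2) * aa k := by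
  have h := Nat.succ_mul_centralBinom_succ k
  have h' : ((k : ℝ) + 1) * (Nat.centralBinom (k + 1) : ℝ)
      = 2 * (2 * k + 1) * (Nat.centralBinom k : ℝ) := by
    exact_mod_cast congrArg (Nat.cast : ℕ → ℝ) h
  unfold aa
  have h4 : (4 : ℝ) ^ (k + 1) = 4 * 4 ^ k := by ring
  rw [h4]
  field_simp
  linear_combination 2 * h'
lemma aa_succ_le (k : ℕ) : aa (k + 1) ≤ aa k := by
  have h := aa_rec k
  have hk : (0 : ℝ) < (k : ℝ) + 1 := by positivity
  have := aa_pos k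
  nlinarith

noncomputable def H (k : ℕ) : ℝ := ∑ j ∈ range k, (1/2 + (j : ℝ))⁻¹
noncomputable def T (k : ℕ) : ℝ := ∑ i ∈ range k, aa i / ((k : ℝ) - i)
noncomputable def W (k : ℕ) : ℝ := ∑ i ∈ range k, (i : ℝ) * aa i / ((k : ℝ) - i)
lemma W_eq (k : ℕ) : W k = k * T k - (∑ i ∈ range k, aa i) := by
  unfold W T
  rw [mul_sum, ← sum_sub_distrib]
  refine sum_congr rfl fun i hi => ?_
  have hik : (i : ℝ) < k := by exact_mod_cast mem_range.mp hi
  have hne : (k : ℝ) - i ≠ 0 := by linarith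
  field_simp
  ring
lemma W_succ (k : ℕ) : W (k + 1) = W k + T k / 2 := by
  have step1 : W (k + 1) = ∑ i ∈ range k, ((i : ℝ) + 1) * aa (i + 1) / ((k : ℝ) - i) := by
    unfold W
    rw [sum_range_succ']
    simp only [Nat.cast_zero, zero_mul, zero_div, add_zero]
    refine sum_congr rfl fun i hi => ?_
    push_cast
    ring_nf
  rw [step1]
  have step2 : ∀ i ∈ range k, ((i : ℝ) + 1) * aa (i + 1) / ((k : ℝ) - i)
      = (i : ℝ) * aa i / ((k : ℝ) - i) + (aa i / ((k : ℝ) - i)) / 2 := by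
    intro i _
    rw [aa_rec]
    ring
  rw [sum_congr rfl step2, sum_add_distrib]
  unfold W T
  rw [sum_div]
lemma T_succ (k : ℕ) : ((k : ℝ) + 1) * T (k + 1) = aa k + ((k : ℝ) + 1/2) * T k := by
  have h1 : ((k : ℝ) + 1) * T (k + 1) = W (k + 1) + ∑ i ∈ range (k + 1), aa i := by
    unfold T W
    push_cast
    rw [mul_sum, ← sum_add_distrib]
    refine sum_congr rfl fun i hi => ?_
    have hik : (i : ℝ) < (k : ℝ) + 1 := by
      have := mem_range.mp hi; push_cast; exact_mod_cast this
    have hne : (k : ℝ) + 1 - i ≠ 0 := by intro h; linarith [sub_eq_zero.mp h]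
    field_simp
    ring
  rw [h1, W_succ, W_eq, sum_range_succ]
  ring
lemma T_eq (k : ℕ) : T k = aa k * H k := by
  induction k with
  | zero => simp [T, H]
  | succ k ih =>
    have hk : ((k : ℝ) + 1) ≠ 0 := by positivity
    have h2 : (1/2 + (k : ℝ)) ≠ 0 := by positivity
    have hH : H (k + 1) = H k + (1/2 + (k : ℝ))⁻¹ := by
      unfold H; rw [sum_range_succ]
    refine mul_left_cancel₀ hk ?_
    symm
    calc ((k : ℝ) + 1) * (aa (k + 1) * H (k + 1))
        = (((k : ℝ) + 1) * aa (k + 1)) * (H k + (1/2 + (k : ℝ))⁻¹) := by rw [hH]; ring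
      _ = (((k : ℝ) + 1/2) * aa k) * (H k + (1/2 + (k : ℝ))⁻¹) := by rw [aa_rec]
      _ = ((k : ℝ) + 1/2) * (aa k * H k) + ((1/2 + (k : ℝ)) * (1/2 + (k : ℝ))⁻¹) * aa k := by
          ring
      _ = aa k + ((k : ℝ) + 1/2) * (aa k * H k) := by rw [mul_inv_cancel₀ h2]; ring
      _ = ((k : ℝ) + 1) * T (k + 1) := by rw [T_succ, ih]

noncomputable def P (n : ℕ) : ℝ := ∑ i ∈ range (n + 1), (i : ℝ) * aa i * aa (n - i)
noncomputable def V (n : ℕ) : ℝ := ∑ i ∈ range (n + 1), aa i * aa (n - i)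
lemma P_refl (n : ℕ) : ∑ i ∈ range (n + 1), ((n : ℝ) - i) * aa i * aa (n - i) = P n := by
  have h := sum_range_reflect (fun i => (i : ℝ) * aa i * aa (n - i)) (n + 1)
  unfold P
  rw [← h]
  refine sum_congr rfl fun j hj => ?_
  have hjn : j ≤ n := by have := mem_range.mp hj; omega
  have h1 : n + 1 - 1 - j = n - j := by omega
  have h2 : n - (n - j) = j := by omega
  rw [h1, h2, Nat.cast_sub hjn]
  ring
lemma two_P (n : ℕ) : 2 * P n = (n : ℝ) * V n := by
  have : 2 * P n = P n + ∑ i ∈ range (n + 1), ((n : ℝ) - i) * aa i * aa (n - i) := by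
    rw [P_refl]; ring
  rw [this]
  unfold P V
  rw [mul_sum, ← sum_add_distrib]
  refine sum_congr rfl fun i _ => by ring
lemma P_shift (n : ℕ) : P (n + 1) = P n + V n / 2 := by
  have step1 : P (n + 1) = ∑ i ∈ range (n + 1), ((i : ℝ) + 1) * aa (i + 1) * aa (n - i) := by
    unfold P
    rw [sum_range_succ']
    simp only [Nat.cast_zero, zero_mul, add_zero]
    refine sum_congr rfl fun i _ => ?_
    have : n + 1 - (i + 1) = n - i := by omega
    rw [this]
    push_cast
    ring
  rw [step1]
  have step2 : ∀ i ∈ range (n + 1), ((i : ℝ) + 1) * aa (i + 1) * aa (n - i)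
      = (i : ℝ) * aa i * aa (n - i) + (aa i * aa (n - i)) / 2 := by
    intro i _
    rw [mul_assoc, ← mul_assoc ((i : ℝ) + 1), aa_rec]
    ring
  rw [sum_congr rfl step2, sum_add_distrib]
  unfold P V
  rw [sum_div]
lemma V_eq_one (n : ℕ) : V n = 1 := by
  induction n with
  | zero => simp [V, aa_zero]
  | succ n ih =>
    have hk : ((n : ℝ) + 1) ≠ 0 := by positivity
    have key : ((n : ℝ) + 1) * V (n + 1) = ((n : ℝ) + 1) * V n := by
      have h1 : ((n : ℝ) + 1) * V (n + 1) = 2 * P (n + 1) := by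
        have : ((n : ℝ) + 1) * V (n + 1)
            = P (n + 1) + ∑ i ∈ range (n + 2), (((n + 1 : ℕ) : ℝ) - i) * aa i * aa (n + 1 - i) := by
          unfold V P
          rw [mul_sum, ← sum_add_distrib]
          refine sum_congr rfl fun i _ => by push_cast; ring
        rw [this, P_refl]
        ring
      rw [h1, P_shift, mul_add, two_P, ih]
      ring
    have := mul_left_cancel₀ hk key
    rw [this, ih]

lemma aa_le_one (k : ℕ) : aa k ≤ 1 := by
  induction k with
  | zero => rw [aa_zero]
  | succ k ih => exact (aa_succ_le k).trans ih

variable {z : ℝ} (hz : |z| < 1)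
lemma summable_norm_aa {z : ℝ} (hz : |z| < 1) : Summable fun k => ‖aa k * z ^ k‖ := by
  refine Summable.of_nonneg_of_le (fun k => norm_nonneg _) (fun k => ?_)
    (summable_geometric_of_lt_one (abs_nonneg z) hz)
  rw [norm_mul, norm_pow, Real.norm_eq_abs, Real.norm_eq_abs,
    abs_of_pos (aa_pos k)]
  calc aa k * |z| ^ k ≤ 1 * |z| ^ k := by
        have := pow_nonneg (abs_nonneg z) k
        nlinarith [aa_le_one k]
    _ = |z| ^ k := one_mul _
lemma hasSum_aa {z : ℝ} (hz : |z| < 1) :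
    HasSum (fun k => aa k * z ^ k) ((1 - z) ^ (-(1/2) : ℝ)) := by
  have h1z : 0 < 1 - z := by
    have := abs_lt.mp hz
    linarith [this.2]
  have hsum : Summable fun k => aa k * z ^ k := (summable_norm_aa hz).of_norm
  set S : ℝ := ∑' k, aa k * z ^ k with hSdef
  have hS : HasSum (fun k => aa k * z ^ k) S := hsum.hasSum
  -- the square of the sum is the geometric series
  have hsq : S * S = (1 - z)⁻¹ := by
    have hmul := hasSum_sum_range_mul_of_summable_norm
      (summable_norm_aa hz) (summable_norm_aa hz)
    have hterm : ∀ k : ℕ, (∑ i ∈ range (k + 1), (aa i * z ^ i) * (aa (k - i) * z ^ (k - i)))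
        = z ^ k := by
      intro k
      have : ∀ i ∈ range (k + 1), (aa i * z ^ i) * (aa (k - i) * z ^ (k - i))
          = (aa i * aa (k - i)) * z ^ k := by
        intro i hi
        have hik : i ≤ k := by have := mem_range.mp hi; omega
        have : z ^ i * z ^ (k - i) = z ^ k := by
          rw [← pow_add, Nat.add_sub_cancel' hik]
        rw [mul_mul_mul_comm, this]
      rw [sum_congr rfl this, ← sum_mul]
      have := V_eq_one k
      unfold V at this
      rw [this, one_mul]
    rw [funext hterm] at hmul
    rw [← hS.tsum_eq]
    exact hmul.unique (hasSum_geometric_of_abs_lt_one hz)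
  -- positivity of the sum
  have hSpos : 0 < S := by
    have hinj2 : Function.Injective (fun j : ℕ => 2 * j) := fun a b h => by dsimp at h; omega
    have hinj2' : Function.Injective (fun j : ℕ => 2 * j + 1) := fun a b h => by dsimp at h; omega
    have he : Summable fun j => aa (2 * j) * z ^ (2 * j) := hsum.comp_injective hinj2
    have ho : Summable fun j => aa (2 * j + 1) * z ^ (2 * j + 1) := hsum.comp_injective hinj2'
    have hsplit : HasSum (fun k => aa k * z ^ k) ((∑' j, aa (2 * j) * z ^ (2 * j))
        + ∑' j, aa (2 * j + 1) * z ^ (2 * j + 1)) :=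
      HasSum.even_add_odd he.hasSum ho.hasSum
    have hSeq : S = (∑' j, aa (2 * j) * z ^ (2 * j)) + ∑' j, aa (2 * j + 1) * z ^ (2 * j + 1) :=
      hS.unique hsplit
    have hpair : HasSum (fun j => aa (2 * j) * z ^ (2 * j) + aa (2 * j + 1) * z ^ (2 * j + 1)) S := by
      rw [hSeq]; exact he.hasSum.add ho.hasSum
    have hnonneg : ∀ j : ℕ, 0 ≤ aa (2 * j) * z ^ (2 * j) + aa (2 * j + 1) * z ^ (2 * j + 1) := by
      intro j
      have h1 : z ^ (2 * j) = |z| ^ (2 * j) := by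
        rw [pow_mul, pow_mul, sq_abs]
      have h2 : -(|z| ^ (2 * j + 1)) ≤ z ^ (2 * j + 1) := by
        rw [← abs_pow]
        exact neg_abs_le _
      have h3 : aa (2 * j + 1) ≤ aa (2 * j) := aa_succ_le _
      have h4 : (0:ℝ) < aa (2 * j + 1) := aa_pos _
      have h5 : |z| ^ (2 * j + 1) = |z| ^ (2 * j) * |z| := by ring
      have h6 : |z| ≤ 1 := le_of_lt hz
      have h7 : (0:ℝ) ≤ |z| ^ (2 * j) := by positivity
      have key : aa (2 * j + 1) * |z| ≤ aa (2 * j) := by nlinarith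
      have e1 : (aa (2 * j) - aa (2 * j + 1) * |z|) * |z| ^ (2 * j)
          = aa (2 * j) * z ^ (2 * j) - aa (2 * j + 1) * |z| ^ (2 * j + 1) := by
        rw [h1, h5]; ring
      have base : 0 ≤ (aa (2 * j) - aa (2 * j + 1) * |z|) * |z| ^ (2 * j) :=
        mul_nonneg (by linarith) h7
      rw [e1] at base
      have h8 : aa (2 * j + 1) * (-(|z| ^ (2 * j + 1))) ≤ aa (2 * j + 1) * z ^ (2 * j + 1) :=
        mul_le_mul_of_nonneg_left h2 h4.le
      linarith
    have hfirst : aa (2 * 0) * z ^ (2 * 0) + aa (2 * 0 + 1) * z ^ (2 * 0 + 1) ≤ S :=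
      le_hasSum hpair 0 fun j _ => hnonneg j
    have haa1 : aa 1 ≤ 1 := aa_le_one 1
    have h4 : (0:ℝ) < aa 1 := aa_pos 1
    have hzlb : -1 < z := (abs_lt.mp hz).1
    norm_num [aa_zero] at hfirst
    linarith [mul_lt_mul_of_pos_left hzlb h4]
  -- identify with the rpow
  have hXpos : (0:ℝ) < (1 - z) ^ (-(1/2) : ℝ) := Real.rpow_pos_of_pos h1z _
  have hXsq : ((1 - z) ^ (-(1/2) : ℝ)) * ((1 - z) ^ (-(1/2) : ℝ)) = (1 - z)⁻¹ := by
    rw [← Real.rpow_add h1z]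
    norm_num [Real.rpow_neg_one]
  have hfact : (S - (1 - z) ^ (-(1/2) : ℝ)) * (S + (1 - z) ^ (-(1/2) : ℝ)) = 0 := by
    have : S * S - ((1 - z) ^ (-(1/2) : ℝ)) * ((1 - z) ^ (-(1/2) : ℝ)) = 0 := by
      rw [hsq, hXsq, sub_self]
    nlinarith [this]
  rcases mul_eq_zero.mp hfact with h | h
  · have : S = (1 - z) ^ (-(1/2) : ℝ) := by linarith [sub_eq_zero.mp h]
    rw [← this]
    exact hS
  · exfalso; nlinarith
lemma digamma_rec (x : ℝ) (hx : 0 < x) : digamma (x + 1) = digamma x + x⁻¹ := by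
  have hder : ∀ {y : ℝ}, 0 < y → DifferentiableAt ℝ (fun t => Real.log (Real.Gamma t)) y := by
    intro y hy
    have hne : ∀ m : ℕ, y ≠ -(m : ℝ) := fun m =>
      ne_of_gt (by have := neg_nonpos.mpr (Nat.cast_nonneg (α := ℝ) m); linarith)
    exact (Real.differentiableAt_Gamma hne).log (Real.Gamma_ne_zero hne)
  unfold digamma
  rw [← deriv_comp_add_const (fun t => Real.log (Real.Gamma t)) 1 x, ← Real.deriv_log x,
    ← deriv_add (hder hx) (Real.differentiableAt_log hx.ne')]
  apply Filter.EventuallyEq.deriv_eq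
  filter_upwards [eventually_gt_nhds hx] with y hy
  rw [Real.Gamma_add_one hy.ne', Real.log_mul hy.ne' (Real.Gamma_pos_of_pos hy).ne', add_comm]
  rfl
lemma digamma_half (k : ℕ) : digamma (1/2 + k) = digamma (1/2) + H k := by
  induction k with
  | zero => simp [H]
  | succ k ih =>
    have h1 : (1/2 : ℝ) + (k + 1 : ℕ) = (1/2 + (k : ℕ)) + 1 := by push_cast; ring
    have h2 : (0:ℝ) < 1/2 + (k : ℕ) := by positivity
    rw [h1, digamma_rec _ h2, ih]
    unfold H
    rw [sum_range_succ]
    ring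

noncomputable def bb (z : ℝ) (m : ℕ) : ℝ := z ^ m / m
lemma hasSum_bb {z : ℝ} (hz : |z| < 1) : HasSum (bb z) (-Real.log (1 - z)) := by
  have h := Real.hasSum_pow_div_log_of_abs_lt_one hz
  have h' : HasSum (fun n : ℕ => bb z (n + 1)) (-Real.log (1 - z)) := by
    refine h.congr_fun fun n => ?_
    unfold bb
    push_cast
    ring
  have := (hasSum_nat_add_iff (f := bb z) 1).mp h'
  simpa [bb] using this
lemma summable_norm_bb {z : ℝ} (hz : |z| < 1) : Summable fun m => ‖bb z m‖ := by
  refine Summable.of_nonneg_of_le (fun k => norm_nonneg _) (fun m => ?_)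
    (summable_geometric_of_lt_one (abs_nonneg z) hz)
  unfold bb
  rw [Real.norm_eq_abs, abs_div, abs_pow, Nat.abs_cast]
  rcases Nat.eq_zero_or_pos m with hm | hm
  · subst hm; simp
  · have h1 : (1:ℝ) ≤ (m : ℝ) := by exact_mod_cast hm
    have h2 : (0:ℝ) ≤ |z| ^ m := by positivity
    rw [div_le_iff₀ (by linarith)]
    nlinarith
theorem main (z : ℝ) (hz : |z| < 1) :
    HasSum
      (fun k : ℕ =>
        (1 - z) ^ (-(1/2) : ℝ) * (((4 : ℝ) ^ k)⁻¹ * (Nat.choose (2 * k) k : ℝ) *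
          (digamma (1/2 + k) - digamma (1/2)) * z ^ k))
      (-(1 - z)⁻¹ * Real.log (1 - z)) := by
  have h1z : 0 < 1 - z := by have := abs_lt.mp hz; linarith [this.2]
  -- Cauchy product of the two series
  have hmul := hasSum_sum_range_mul_of_summable_norm (f := fun k => aa k * z ^ k) (g := bb z)
    (summable_norm_aa hz) (summable_norm_bb hz)
  rw [(hasSum_aa hz).tsum_eq, (hasSum_bb hz).tsum_eq] at hmul
  -- identify the coefficients
  have hterm : ∀ k : ℕ, (∑ i ∈ range (k + 1), (aa i * z ^ i) * bb z (k - i))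
      = aa k * H k * z ^ k := by
    intro k
    have step : ∀ i ∈ range (k + 1), (aa i * z ^ i) * bb z (k - i)
        = (aa i / ((k - i : ℕ) : ℝ)) * z ^ k := by
      intro i hi
      have hik : i ≤ k := by have := mem_range.mp hi; omega
      have hzz : z ^ i * z ^ (k - i) = z ^ k := by
        rw [← pow_add, Nat.add_sub_cancel' hik]
      unfold bb
      rw [← hzz]
      ring
    rw [sum_congr rfl step, sum_range_succ]
    simp only [Nat.sub_self, Nat.cast_zero, div_zero, zero_mul, add_zero]
    have : ∀ i ∈ range k, (aa i / ((k - i : ℕ) : ℝ)) * z ^ k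
        = (aa i / ((k : ℝ) - i)) * z ^ k := by
      intro i hi
      have hik : i ≤ k := by have := mem_range.mp hi; omega
      rw [Nat.cast_sub hik]
    rw [sum_congr rfl this, ← sum_mul, ← T, T_eq]
  rw [funext hterm] at hmul
  -- multiply by the prefactor
  have hfinal := hmul.mul_left ((1 - z) ^ (-(1/2) : ℝ))
  have hval : (1 - z) ^ (-(1/2) : ℝ) * ((1 - z) ^ (-(1/2) : ℝ) * -Real.log (1 - z))
      = -(1 - z)⁻¹ * Real.log (1 - z) := by
    rw [← mul_assoc, ← Real.rpow_add h1z]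
    norm_num [Real.rpow_neg_one]
  rw [hval] at hfinal
  refine hfinal.congr_fun fun k => ?_
  rw [digamma_half]
  simp only [aa]
  rw [Nat.centralBinom_eq_two_mul_choose]
  push_cast
  ring



end Stmt15Aux

theorem stmt_15 (z : ℝ) (hz : |z| < 1) :
    HasSum
      (fun k : ℕ =>
        (1 - z) ^ (-(1/2) : ℝ) * (((4 : ℝ) ^ k)⁻¹ * (Nat.choose (2 * k) k : ℝ) *
          (digamma (1/2 + k) - digamma (1/2)) * z ^ k))
      (-(1 - z)⁻¹ * Real.log (1 - z)) :=
  Stmt15Aux.main z hz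
end

section
/- For H(t) = e^{-t/2} (so ψ_H(s) = ψ(1/2 + s)), the threshold t_n^H equals ψ(1/2) + h_n for all integers n ≥ 0, where h_n = 1 + 1/2 + ... + 1/n is the n-th harmonic number (h_0 = 0) and ψ(1/2) = −γ − log 4. -/
open Finset

noncomputable def cB (j : ℕ) : ℝ := (Nat.centralBinom j : ℝ) / 4 ^ j

noncomputable def sB (j : ℕ) : ℝ := cB j / (2 * (j : ℝ) - 1)

noncomputable def aA (k : ℕ) : ℝ := ∑ m ∈ range k, 2 / (2 * (m : ℝ) + 1)

lemma cB_pos (j : ℕ) : 0 < cB j := by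
  have := Nat.centralBinom_pos j
  have h4 : (0:ℝ) < 4 ^ j := by positivity
  unfold cB
  positivity

lemma cB_zero : cB 0 = 1 := by simp [cB, Nat.centralBinom]

lemma twoJm1_ne (j : ℕ) : (2 * (j : ℝ) - 1) ≠ 0 := by
  rcases Nat.eq_zero_or_pos j with h | h
  · subst h; norm_num
  · have : (1:ℝ) ≤ (j:ℝ) := by exact_mod_cast h
    nlinarith

lemma cB_succ (j : ℕ) : (2 * (j:ℝ) + 2) * cB (j+1) = (2 * (j:ℝ) + 1) * cB j := by
  have h := Nat.succ_mul_centralBinom_succ j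
  have h' : ((j:ℝ) + 1) * (Nat.centralBinom (j+1) : ℝ)
      = 2 * (2 * (j:ℝ) + 1) * (Nat.centralBinom j : ℝ) := by exact_mod_cast h
  have h4 : (4:ℝ) ^ j ≠ 0 := by positivity
  unfold cB
  rw [pow_succ]
  field_simp
  nlinarith [h', pow_pos (show (0:ℝ)<4 by norm_num) j]

lemma sB_mul (j : ℕ) : (2 * (j:ℝ) - 1) * sB j = cB j := by
  unfold sB; field_simp [twoJm1_ne j]

lemma sB_succ_mul (j : ℕ) : (2 * (j:ℝ) + 2) * sB (j+1) = cB j := by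
  have h := cB_succ j
  have hne : (2 * ((j:ℝ)+1) - 1) ≠ 0 := by have := twoJm1_ne (j+1); push_cast at this ⊢; linarith [this]
  unfold sB
  push_cast
  rw [← mul_div_assoc, div_eq_iff hne]
  nlinarith [h]

lemma sB_zero : sB 0 = -1 := by simp [sB, cB_zero]

lemma cB_succ_sub (j : ℕ) : cB (j+1) = cB j - sB (j+1) := by
  have h1 := cB_succ j
  have h2 := sB_succ_mul j
  have hne : (2*(j:ℝ)+2) ≠ 0 := by positivity
  have : (2*(j:ℝ)+2) * cB (j+1) = (2*(j:ℝ)+2) * (cB j - sB (j+1)) := by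
    rw [mul_sub, h2, h1]; ring
  exact mul_left_cancel₀ hne this

-- L1 partial-sum formula
lemma lem1_aux (m : ℕ) (hm : 1 ≤ m) : ∀ k, k ≤ m →
    ∑ j ∈ range (k+1), sB j * cB (m - j)
      = -(((m:ℝ) - k) / m) * (cB k * cB (m - k)) := by
  intro k
  induction k with
  | zero =>
    intro _
    have hm' : (m:ℝ) ≠ 0 := by
      have : (1:ℝ) ≤ (m:ℝ) := by exact_mod_cast hm
      linarith
    simp [sB_zero, cB_zero]
    field_simp
  | succ k ih =>
    intro hk
    have hk' : k ≤ m := le_of_lt (Nat.lt_of_succ_le hk)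
    obtain ⟨l, hl⟩ : ∃ l, m = k + 1 + l := ⟨m - (k+1), by omega⟩
    have e1 : m - k = l + 1 := by omega
    have e2 : m - (k+1) = l := by omega
    have hmR : (m:ℝ) = (k:ℝ) + 1 + l := by exact_mod_cast congrArg (Nat.cast : ℕ → ℝ) hl
    rw [Finset.sum_range_succ, ih hk', e1, e2]
    -- now pure algebra
    have hccl := cB_succ l   -- (2l+2) cB (l+1) = (2l+1) cB l
    have hsk := sB_succ_mul k -- (2k+2) sB (k+1) = cB k
    have hck := cB_succ k    -- (2k+2) cB (k+1) = (2k+1) cB k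
    have hne1 : (2*(k:ℝ)+2) ≠ 0 := by positivity
    have hne2 : (2*(l:ℝ)+2) ≠ 0 := by positivity
    have hcl : cB (l+1) = (2*(l:ℝ)+1)/(2*(l:ℝ)+2) * cB l := by
      field_simp; linarith [hccl]
    have hsk' : sB (k+1) = cB k / (2*(k:ℝ)+2) := by
      field_simp; linarith [hsk]
    have hck' : cB (k+1) = (2*(k:ℝ)+1)/(2*(k:ℝ)+2) * cB k := by
      field_simp; linarith [hck]
    rw [hcl, hsk', hck', hmR]
    push_cast
    have hmne2 : (k:ℝ) + 1 + l ≠ 0 := by positivity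
    field_simp
    ring

lemma lem1 (m : ℕ) (hm : 1 ≤ m) : ∑ j ∈ range (m+1), sB j * cB (m - j) = 0 := by
  have := lem1_aux m hm m le_rfl
  simpa using this

-- reflected sums
lemma sum_reflect_mul (m : ℕ) (f g : ℕ → ℝ) :
    ∑ j ∈ range (m+1), f j * g (m - j) = ∑ j ∈ range (m+1), f (m - j) * g j := by
  rw [← Finset.sum_range_reflect]
  apply Finset.sum_congr rfl
  intro j hj
  have hj' : j ≤ m := Nat.lt_succ_iff.mp (Finset.mem_range.mp hj)
  have : m + 1 - 1 - j = m - j := by omega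
  rw [this, Nat.sub_sub_self hj']

lemma lem1c (m : ℕ) (hm : 1 ≤ m) : ∑ j ∈ range (m+1), cB j * sB (m - j) = 0 := by
  rw [sum_reflect_mul m cB sB]
  rw [← lem1 m hm]
  apply Finset.sum_congr rfl
  intro j hj; ring

lemma lem3 (m : ℕ) : ∑ j ∈ range (m+1), cB j * cB (m - j) = 1 := by
  induction m with
  | zero => simp [cB_zero]
  | succ m ih =>
    have h1c := lem1c (m+1) (by omega)
    rw [Finset.sum_range_succ] at h1c ⊢
    simp only [Nat.sub_self, sB_zero, cB_zero] at h1c ⊢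
    have hsum : ∑ j ∈ range (m+1), cB j * sB (m + 1 - j) = cB (m+1) := by linarith
    have expand : ∀ j ∈ range (m+1), cB j * cB (m + 1 - j)
        = cB j * cB (m - j) - cB j * sB (m + 1 - j) := by
      intro j hj
      have hj' : j ≤ m := Nat.lt_succ_iff.mp (Finset.mem_range.mp hj)
      have e1 : m + 1 - j = (m - j) + 1 := by omega
      rw [e1, cB_succ_sub (m - j)]
      ring
    rw [Finset.sum_congr rfl expand, Finset.sum_sub_distrib, ih, hsum]
    ring

lemma aA_succ (k : ℕ) : aA (k+1) = aA k + 2 / (2*(k:ℝ)+1) := by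
  unfold aA; rw [Finset.sum_range_succ]

lemma aA_zero : aA 0 = 0 := by simp [aA]

lemma aA_one : aA 1 = 2 := by simp [aA]

noncomputable def bB (k : ℕ) : ℝ := cB k * aA k

lemma bB_rec (k : ℕ) : (2*(k:ℝ)+2) * bB (k+1) = (2*(k:ℝ)+1) * bB k + 2 * cB k := by
  unfold bB
  rw [aA_succ]
  have h := cB_succ k
  have hne : (2*(k:ℝ)+1) ≠ 0 := by positivity
  have : (2*(k:ℝ)+2) * (cB (k+1) * (aA k + 2/(2*(k:ℝ)+1)))
      = ((2*(k:ℝ)+2) * cB (k+1)) * (aA k + 2/(2*(k:ℝ)+1)) := by ring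
  rw [this, h]
  field_simp

noncomputable def YY (m : ℕ) : ℝ := ∑ k ∈ range (m+1), bB k * sB (m - k)

lemma YY_step (m : ℕ) (hm : 1 ≤ m) : (2*(m:ℝ)+2) * YY (m+1) = 2*(m:ℝ) * YY m := by
  unfold YY
  rw [Finset.mul_sum]
  have split : ∀ k ∈ range (m+2), (2*(m:ℝ)+2) * (bB k * sB (m+1-k))
      = bB k * (2*((m+1-k:ℕ):ℝ) * sB (m+1-k)) + 2*(k:ℝ) * bB k * sB (m+1-k) := by
    intro k hk
    have hk' : k ≤ m + 1 := Nat.lt_succ_iff.mp (Finset.mem_range.mp hk)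
    have : ((m+1-k:ℕ):ℝ) = (m:ℝ) + 1 - k := by
      push_cast [Nat.cast_sub hk']; ring
    rw [this]; ring
  rw [Finset.sum_congr rfl split, Finset.sum_add_distrib]
  -- Σ1
  have S1 : ∑ k ∈ range (m+2), bB k * (2*((m+1-k:ℕ):ℝ) * sB (m+1-k))
      = ∑ k ∈ range (m+1), bB k * cB (m - k) := by
    rw [Finset.sum_range_succ]
    simp only [Nat.sub_self]
    norm_num
    apply Finset.sum_congr rfl
    intro k hk
    have hk' : k ≤ m := Nat.lt_succ_iff.mp (Finset.mem_range.mp hk)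
    have e1 : m + 1 - k = (m - k) + 1 := by omega
    rw [e1]
    have e2 : ((m-k+1:ℕ):ℝ) = ((m-k:ℕ):ℝ) + 1 := by push_cast; ring
    rw [e2]
    have := sB_succ_mul (m-k)
    have : 2*(((m-k:ℕ):ℝ)+1) * sB ((m-k)+1) = cB (m-k) := by
      have h := sB_succ_mul (m-k); push_cast at h ⊢; linarith
    rw [mul_comm (2:ℝ) _] at this ⊢
    rw [this]
  -- Σ2
  have S2 : ∑ k ∈ range (m+2), 2*(k:ℝ) * bB k * sB (m+1-k)
      = (∑ k ∈ range (m+1), (2*(k:ℝ)+1) * bB k * sB (m - k)) := by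
    rw [Finset.sum_range_succ']
    norm_num
    have step : ∀ k ∈ range (m+1), 2*((k:ℝ)+1) * bB (k+1) * sB (m+1-(k+1))
        = (2*(k:ℝ)+1) * bB k * sB (m-k) + 2 * cB k * sB (m-k) := by
      intro k hk
      have e1 : m + 1 - (k+1) = m - k := by omega
      rw [e1]
      have h := bB_rec k
      have : 2*((k:ℝ)+1) * bB (k+1) = (2*(k:ℝ)+1) * bB k + 2 * cB k := by
        push_cast at h ⊢; linarith
      rw [this]; ring
    rw [Finset.sum_congr rfl step, Finset.sum_add_distrib]
    have : ∑ k ∈ range (m+1), 2 * cB k * sB (m-k) = 0 := by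
      have := lem1c m hm
      have e : ∑ k ∈ range (m+1), 2 * cB k * sB (m-k)
          = 2 * ∑ k ∈ range (m+1), cB k * sB (m-k) := by
        rw [Finset.mul_sum]; apply Finset.sum_congr rfl; intro k _; ring
      rw [e, this]; ring
    rw [this]; ring
  rw [S1, S2, ← Finset.sum_add_distrib]
  rw [Finset.mul_sum]
  apply Finset.sum_congr rfl
  intro k hk
  have hk' : k ≤ m := Nat.lt_succ_iff.mp (Finset.mem_range.mp hk)
  have e1 : ((m-k:ℕ):ℝ) = (m:ℝ) - k := by
    push_cast [Nat.cast_sub hk']; ring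
  have e2 : cB (m-k) = (2*((m-k:ℕ):ℝ) - 1) * sB (m-k) := (sB_mul (m-k)).symm
  rw [e2, e1]
  ring

lemma lemY (m : ℕ) (hm : 1 ≤ m) : YY m = -1/(m:ℝ) := by
  induction m with
  | zero => omega
  | succ m ih =>
    rcases Nat.eq_zero_or_pos m with h0 | hpos
    · subst h0
      unfold YY
      rw [Finset.sum_range_succ, Finset.sum_range_succ, Finset.sum_range_zero]
      norm_num [bB, aA_zero, aA_one, sB_zero]
      have c1 : cB 1 = 1/2 := by
        have := cB_succ 0
        rw [cB_zero] at this
        push_cast at this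
        linarith
      rw [c1]; norm_num
    · have hstep := YY_step m hpos
      rw [ih hpos] at hstep
      have hne : (2*(m:ℝ)+2) ≠ 0 := by positivity
      have hmne : (m:ℝ) ≠ 0 := by
        have : (1:ℝ) ≤ (m:ℝ) := by exact_mod_cast hpos
        linarith
      have : YY (m+1) = (2*(m:ℝ) * (-1/(m:ℝ))) / (2*(m:ℝ)+2) := by
        field_simp at hstep ⊢
        linarith
      rw [this]
      push_cast
      field_simp

noncomputable def hH (m : ℕ) : ℝ := ∑ k ∈ range m, (1:ℝ)/((k:ℝ)+1)

lemma lemE (m : ℕ) : ∑ k ∈ range (m+1), cB k * cB (m-k) * aA k = hH m := by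
  induction m with
  | zero => simp [cB_zero, aA_zero, hH]
  | succ m ih =>
    have hY := lemY (m+1) (by omega)
    unfold YY at hY
    rw [Finset.sum_range_succ] at hY
    simp only [Nat.sub_self, sB_zero] at hY
    -- hY : ∑_{k∈range(m+1)} bB k * sB (m+1-k) + bB (m+1) * (-1) = -1/(m+1)
    have expand : ∀ k ∈ range (m+1), cB k * cB (m+1-k) * aA k
        = cB k * cB (m-k) * aA k - bB k * sB (m+1-k) := by
      intro k hk
      have hk' : k ≤ m := Nat.lt_succ_iff.mp (Finset.mem_range.mp hk)
      have e1 : m + 1 - k = (m - k) + 1 := by omega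
      rw [e1, cB_succ_sub (m-k), ← e1]
      unfold bB
      ring
    rw [Finset.sum_range_succ, Finset.sum_congr rfl expand, Finset.sum_sub_distrib, ih]
    simp only [Nat.sub_self]
    have : ∑ k ∈ range (m+1), bB k * sB (m+1-k) = -1/((m:ℝ)+1) + bB (m+1) := by
      push_cast at hY ⊢; linarith
    rw [this]
    unfold hH bB
    rw [Finset.sum_range_succ]
    rw [cB_zero]
    push_cast
    ring

lemma odd_cast_ne (a b : ℕ) : (2*(a:ℝ) - 2*(b:ℝ) - 1) ≠ 0 := by
  intro h
  have h2 : ((2*(a:ℤ) - 2*(b:ℤ) - 1 : ℤ) : ℝ) = 0 := by push_cast; linarith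
  have h3 : (2*(a:ℤ) - 2*(b:ℤ) - 1 : ℤ) = 0 := by exact_mod_cast h2
  omega

lemma odd_cast_ne' (a b : ℕ) : (2*(a:ℝ) - 2*(b:ℝ) + 1) ≠ 0 := by
  intro h
  have h2 : ((2*(a:ℤ) - 2*(b:ℤ) + 1 : ℤ) : ℝ) = 0 := by push_cast; linarith
  have h3 : (2*(a:ℤ) - 2*(b:ℤ) + 1 : ℤ) = 0 := by exact_mod_cast h2
  omega

noncomputable def pP (i : ℕ) : ℕ → ℝ
  | 0 => -1/(2*(i:ℝ)+1)
  | (k+1) => (2*(k:ℝ) - 2*(i:ℝ)) / (2*(k:ℝ) - 2*(i:ℝ) + 1) * pP i k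

lemma pP_rec (i k : ℕ) : (2*(k:ℝ) - 2*(i:ℝ) + 1) * pP i (k+1)
    = (2*(k:ℝ) - 2*(i:ℝ)) * pP i k := by
  show (2*(k:ℝ) - 2*(i:ℝ) + 1) * ((2*(k:ℝ) - 2*(i:ℝ)) / (2*(k:ℝ) - 2*(i:ℝ) + 1) * pP i k) = _
  rw [← mul_assoc, mul_div_cancel₀ _ (odd_cast_ne' k i)]

lemma pP_zero_of_gt (i k : ℕ) (h : i < k) : pP i k = 0 := by
  induction k with
  | zero => omega
  | succ k ih =>
    rcases Nat.lt_or_ge i k with h' | h'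
    · show (2*(k:ℝ) - 2*(i:ℝ)) / (2*(k:ℝ) - 2*(i:ℝ) + 1) * pP i k = 0
      rw [ih h']; ring
    · have : i = k := by omega
      subst this
      show (2*(i:ℝ) - 2*(i:ℝ)) / (2*(i:ℝ) - 2*(i:ℝ) + 1) * pP i i = 0
      norm_num

noncomputable def wW (i j : ℕ) : ℝ := ∑ k ∈ range (j+1), pP i k * sB (j - k)

lemma lemW (i : ℕ) : ∀ j : ℕ, (2*(j:ℝ) - 2*(i:ℝ) - 1) * wW i j = -(cB j) := by
  intro j
  induction j with
  | zero =>
    unfold wW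
    rw [Finset.sum_range_one]
    have hne : (2*(i:ℝ)+1) ≠ 0 := by positivity
    have h0 : pP i 0 = -1/(2*(i:ℝ)+1) := rfl
    simp only [Nat.sub_self, sB_zero, cB_zero, h0]
    push_cast
    field_simp
    ring
  | succ j ih =>
    unfold wW
    rw [Finset.mul_sum]
    have split : ∀ k ∈ range (j+2), (2*((j:ℝ)+1) - 2*(i:ℝ) - 1) * (pP i k * sB (j+1-k))
        = pP i k * (2*((j+1-k:ℕ):ℝ) * sB (j+1-k))
          + (2*(k:ℝ) - 2*(i:ℝ) - 1) * pP i k * sB (j+1-k) := by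
      intro k hk
      have hk' : k ≤ j + 1 := Nat.lt_succ_iff.mp (Finset.mem_range.mp hk)
      have e : ((j+1-k:ℕ):ℝ) = (j:ℝ) + 1 - k := by push_cast [Nat.cast_sub hk']; ring
      rw [e]; push_cast; ring
    push_cast
    rw [Finset.sum_congr rfl split, Finset.sum_add_distrib]
    have S1 : ∑ k ∈ range (j+2), pP i k * (2*((j+1-k:ℕ):ℝ) * sB (j+1-k))
        = ∑ k ∈ range (j+1), pP i k * cB (j - k) := by
      rw [Finset.sum_range_succ]
      simp only [Nat.sub_self]
      norm_num
      apply Finset.sum_congr rfl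
      intro k hk
      have hk' : k ≤ j := Nat.lt_succ_iff.mp (Finset.mem_range.mp hk)
      have e1 : j + 1 - k = (j - k) + 1 := by omega
      rw [e1]
      have h := sB_succ_mul (j-k)
      have e2 : 2*((j-k+1:ℕ):ℝ) * sB ((j-k)+1) = cB (j-k) := by
        push_cast at h ⊢; linarith
      rw [e2]
    have S2 : ∑ k ∈ range (j+2), (2*(k:ℝ) - 2*(i:ℝ) - 1) * pP i k * sB (j+1-k)
        = sB (j+1) + ∑ k ∈ range (j+1), (2*(k:ℝ) - 2*(i:ℝ)) * pP i k * sB (j - k) := by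
      rw [Finset.sum_range_succ']
      have e0 : (2*((0:ℕ):ℝ) - 2*(i:ℝ) - 1) * pP i 0 * sB (j+1-0) = sB (j+1) := by
        show (2*((0:ℕ):ℝ) - 2*(i:ℝ) - 1) * (-1/(2*(i:ℝ)+1)) * sB (j+1) = sB (j+1)
        have : (2*(i:ℝ)+1) ≠ 0 := by positivity
        field_simp
        ring
      rw [e0]
      have step : ∀ k ∈ range (j+1), (2*((k:ℝ)+1) - 2*(i:ℝ) - 1) * pP i (k+1) * sB (j+1-(k+1))
          = (2*(k:ℝ) - 2*(i:ℝ)) * pP i k * sB (j - k) := by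
        intro k hk
        have e1 : j + 1 - (k+1) = j - k := by omega
        rw [e1]
        have h := pP_rec i k
        have e2 : (2*((k:ℝ)+1) - 2*(i:ℝ) - 1) = (2*(k:ℝ) - 2*(i:ℝ) + 1) := by ring
        rw [e2, h]
      have := Finset.sum_congr rfl step
      push_cast at this ⊢
      rw [this]
      ring
    rw [S1, S2]
    have final : ∑ k ∈ range (j+1), pP i k * cB (j-k)
        + ∑ k ∈ range (j+1), (2*(k:ℝ) - 2*(i:ℝ)) * pP i k * sB (j-k)
        = (2*(j:ℝ) - 2*(i:ℝ) - 1) * wW i j := by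
      unfold wW
      rw [Finset.mul_sum, ← Finset.sum_add_distrib]
      apply Finset.sum_congr rfl
      intro k hk
      have hk' : k ≤ j := Nat.lt_succ_iff.mp (Finset.mem_range.mp hk)
      have e1 : ((j-k:ℕ):ℝ) = (j:ℝ) - k := by push_cast [Nat.cast_sub hk']; ring
      have e2 : cB (j-k) = (2*((j-k:ℕ):ℝ) - 1) * sB (j-k) := (sB_mul (j-k)).symm
      rw [e2, e1]
      ring
    have hcs := cB_succ_sub j
    push_cast
    linarith [final, hcs]

lemma lemPhi (N i : ℕ) (hiN : i < N) :
    ∑ j ∈ range (N+1), cB j * cB (N - j) / (2*(j:ℝ) - 2*(i:ℝ) - 1) = 0 := by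
  have term : ∀ j ∈ range (N+1), cB j * cB (N - j) / (2*(j:ℝ) - 2*(i:ℝ) - 1)
      = ∑ k ∈ range (N+1), (if k ≤ j then -(pP i k * sB (j - k) * cB (N - j)) else 0) := by
    intro j hj
    have hj' : j ≤ N := Nat.lt_succ_iff.mp (Finset.mem_range.mp hj)
    have h := lemW i j
    have hne := odd_cast_ne j i
    have hjj : cB j * cB (N - j) / (2*(j:ℝ) - 2*(i:ℝ) - 1) = -(cB (N - j) * wW i j) := by
      rw [div_eq_iff hne]
      have : cB (N-j) * ((2*(j:ℝ) - 2*(i:ℝ) - 1) * wW i j) = cB (N-j) * (-(cB j)) := by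
        rw [h]
      nlinarith [this]
    rw [hjj]
    unfold wW
    rw [Finset.mul_sum, ← Finset.sum_neg_distrib]
    have hsub : range (j+1) ⊆ range (N+1) := Finset.range_subset_range.mpr (by omega)
    have hzero : ∀ x ∈ range (N+1), x ∉ range (j+1) →
        (if x ≤ j then -(pP i x * sB (j - x) * cB (N - j)) else 0) = 0 := by
      intro x _ hnx
      have : ¬ (x ≤ j) := fun hle => hnx (Finset.mem_range.mpr (by omega))
      rw [if_neg this]
    rw [← Finset.sum_subset hsub hzero]
    apply Finset.sum_congr rfl
    intro k hk
    have hkj : k ≤ j := Nat.lt_succ_iff.mp (Finset.mem_range.mp hk)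
    rw [if_pos hkj]
    ring
  rw [Finset.sum_congr rfl term, Finset.sum_comm]
  apply Finset.sum_eq_zero
  intro k hk
  have hk' : k ≤ N := Nat.lt_succ_iff.mp (Finset.mem_range.mp hk)
  -- inner sum over j
  rw [Finset.range_eq_Ico, ← Finset.sum_Ico_consecutive _ (Nat.zero_le k) (by omega : k ≤ N+1)]
  have h1 : ∑ j ∈ Ico 0 k, (if k ≤ j then -(pP i k * sB (j - k) * cB (N - j)) else 0) = 0 := by
    apply Finset.sum_eq_zero
    intro j hj
    exact if_neg (Nat.not_le.mpr (Finset.mem_Ico.mp hj).2)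
  have h2 : ∑ j ∈ Ico k (N+1), (if k ≤ j then -(pP i k * sB (j - k) * cB (N - j)) else 0)
      = ∑ j ∈ Ico k (N+1), -(pP i k * sB (j - k) * cB (N - j)) := by
    apply Finset.sum_congr rfl
    intro j hj
    exact if_pos (Finset.mem_Ico.mp hj).1
  rw [h1, h2, zero_add, Finset.sum_Ico_eq_sum_range]
  have h3 : ∀ d ∈ range (N+1-k), -(pP i k * sB (k + d - k) * cB (N - (k+d)))
      = -pP i k * (sB d * cB ((N-k) - d)) := by
    intro d hd
    have hd' : d < N + 1 - k := Finset.mem_range.mp hd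
    have e1 : k + d - k = d := by omega
    have e2 : N - (k + d) = (N - k) - d := by omega
    rw [e1, e2]; ring
  rw [Finset.sum_congr rfl h3, ← Finset.mul_sum]
  have e4 : N + 1 - k = (N - k) + 1 := by omega
  rw [e4]
  rcases Nat.eq_zero_or_pos (N - k) with h0 | hpos
  · -- then k = N > i, so pP i k = 0
    have hik : i < k := by omega
    rw [pP_zero_of_gt i k hik]
    ring
  · rw [lem1 (N-k) hpos]
    ring

noncomputable def FF (N i : ℕ) : ℝ := ∑ j ∈ range (N+1), cB j * cB (N-j) * aA (Nat.dist i j)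

lemma FF_top (N : ℕ) : FF N N = hH N := by
  unfold FF
  have e : ∀ j ∈ range (N+1), cB j * cB (N-j) * aA (Nat.dist N j)
      = cB j * (cB (N-j) * aA (N-j)) := by
    intro j hj
    have hj' : j ≤ N := Nat.lt_succ_iff.mp (Finset.mem_range.mp hj)
    have : Nat.dist N j = N - j := by unfold Nat.dist; omega
    rw [this]; ring
  rw [Finset.sum_congr rfl e, sum_reflect_mul N cB (fun k => cB k * aA k)]
  rw [← lemE N]
  apply Finset.sum_congr rfl
  intro j hj
  have hj' : j ≤ N := Nat.lt_succ_iff.mp (Finset.mem_range.mp hj)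
  have : N - (N - j) = j := Nat.sub_sub_self hj'
  ring

lemma aDiff (i j : ℕ) : aA (Nat.dist (i+1) j) - aA (Nat.dist i j)
    = -2/(2*(j:ℝ) - 2*(i:ℝ) - 1) := by
  have hne := odd_cast_ne j i
  rcases le_or_gt j i with h | h
  · have d1 : Nat.dist i j = i - j := by unfold Nat.dist; omega
    have d2 : Nat.dist (i+1) j = (i - j) + 1 := by unfold Nat.dist; omega
    rw [d1, d2, aA_succ]
    have ec : ((i-j:ℕ):ℝ) = (i:ℝ) - j := by push_cast [Nat.cast_sub h]; ring
    rw [ec]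
    have hpos : (2*((i:ℝ) - j) + 1) ≠ 0 := by
      have : (j:ℝ) ≤ i := by exact_mod_cast h
      nlinarith
    rw [show aA (i-j) + 2 / (2 * ((i:ℝ) - (j:ℝ)) + 1) - aA (i-j) = 2 / (2 * ((i:ℝ) - (j:ℝ)) + 1) by ring]
    rw [div_eq_div_iff hpos hne]
    ring
  · have d1 : Nat.dist i j = (j - i - 1) + 1 := by unfold Nat.dist; omega
    have d2 : Nat.dist (i+1) j = j - i - 1 := by unfold Nat.dist; omega
    rw [d1, d2, aA_succ]
    have ec : ((j-i-1:ℕ):ℝ) = (j:ℝ) - i - 1 := by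
      have e1 : j - i - 1 = j - (i+1) := by omega
      rw [e1]
      push_cast [Nat.cast_sub (by omega : i + 1 ≤ j)]
      ring
    rw [ec]
    have h2 : (2*((j:ℝ) - i - 1) + 1) = 2*(j:ℝ) - 2*(i:ℝ) - 1 := by ring
    rw [h2]
    ring

lemma FF_step (N i : ℕ) (h : i < N) : FF N (i+1) = FF N i := by
  have hdiff : FF N (i+1) - FF N i
      = -2 * ∑ j ∈ range (N+1), cB j * cB (N-j) / (2*(j:ℝ) - 2*(i:ℝ) - 1) := by
    unfold FF
    rw [← Finset.sum_sub_distrib, Finset.mul_sum]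
    apply Finset.sum_congr rfl
    intro j hj
    have := aDiff i j
    have e : cB j * cB (N-j) * aA (Nat.dist (i+1) j) - cB j * cB (N-j) * aA (Nat.dist i j)
        = cB j * cB (N-j) * (aA (Nat.dist (i+1) j) - aA (Nat.dist i j)) := by ring
    rw [e, this]
    ring
  rw [lemPhi N i h] at hdiff
  linarith [hdiff]

lemma keyRange (N i : ℕ) (hi : i ≤ N) : FF N i = hH N := by
  obtain ⟨d, hd⟩ : ∃ d, i + d = N := ⟨N - i, by omega⟩
  clear hi
  induction d generalizing i with
  | zero =>
    have hiN : i = N := by omega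
    subst hiN
    exact FF_top i
  | succ d ih =>
    have h1 : i < N := by omega
    have h2 : (i+1) + d = N := by omega
    rw [← FF_step N i h1]
    exact ih (i+1) h2

noncomputable def PZ (z : ℕ → ℝ) (k : ℕ) : ℝ := ∑ j ∈ range k, z j

lemma abel1 (n : ℕ) (z g : ℕ → ℝ) (hz : PZ z (n+1) = 0) :
    ∑ i ∈ range (n+1), z i * g i = ∑ i ∈ range n, PZ z (i+1) * (g i - g (i+1)) := by
  have zdef : ∀ i, z i * g i = PZ z (i+1) * g i - PZ z i * g i := by
    intro i
    have : PZ z (i+1) = PZ z i + z i := by unfold PZ; rw [Finset.sum_range_succ]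
    rw [this]; ring
  rw [Finset.sum_congr rfl (fun i _ => zdef i), Finset.sum_sub_distrib]
  rw [Finset.sum_range_succ, hz, Finset.sum_range_succ']
  have h0 : PZ z 0 = 0 := rfl
  rw [h0, zero_mul, add_zero, zero_mul, add_zero, ← Finset.sum_sub_distrib]
  apply Finset.sum_congr rfl
  intro i _
  ring

noncomputable def eE (d : ℕ) : ℝ :=
  if d = 0 then 0 else 4/((2*(d:ℝ)-1)*(2*(d:ℝ)+1))

lemma eE_nonneg (d : ℕ) : 0 ≤ eE d := by
  unfold eE
  rcases Nat.eq_zero_or_pos d with h | h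
  · simp [h]
  · have h1 : (1:ℝ) ≤ (d:ℝ) := by exact_mod_cast h
    rw [if_neg (by omega)]
    have : (0:ℝ) < (2*(d:ℝ)-1)*(2*(d:ℝ)+1) := by nlinarith
    positivity

lemma tele_s16 (D : ℕ) : ∑ d ∈ range D, eE (d+1) = 2 - 2/(2*(D:ℝ)+1) := by
  induction D with
  | zero => norm_num
  | succ D ih =>
    rw [Finset.sum_range_succ, ih]
    unfold eE
    rw [if_neg (by omega)]
    have h1 : (2*((D:ℝ)+1)-1) ≠ 0 := by
      have hD : (0:ℝ) ≤ (D:ℝ) := Nat.cast_nonneg D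
      have : (0:ℝ) < 2*((D:ℝ)+1)-1 := by nlinarith
      exact this.ne'
    have h2 : (2*((D:ℝ)+1)+1) ≠ 0 := by positivity
    have h3 : (2*(D:ℝ)+1) ≠ 0 := by positivity
    push_cast
    field_simp
    ring

noncomputable def CBq (i j : ℕ) : ℝ :=
  aA (Nat.dist i j) - aA (Nat.dist (i+1) j) - aA (Nat.dist i (j+1)) + aA (Nat.dist (i+1) (j+1))

lemma CBq_lt (i j : ℕ) (h : i < j) : CBq i j = eE (Nat.dist i j) := by
  obtain ⟨e, he⟩ : ∃ e, j = i + 1 + e := ⟨j - i - 1, by omega⟩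
  subst he
  have d1 : Nat.dist i (i+1+e) = e + 1 := by unfold Nat.dist; omega
  have d2 : Nat.dist (i+1) (i+1+e) = e := by unfold Nat.dist; omega
  have d3 : Nat.dist i (i+1+e+1) = e + 2 := by unfold Nat.dist; omega
  have d4 : Nat.dist (i+1) (i+1+e+1) = e + 1 := by unfold Nat.dist; omega
  unfold CBq
  rw [d1, d2, d3, d4]
  have e2 : aA (e+2) = aA (e+1) + 2/(2*((e:ℝ)+1)+1) := by
    have := aA_succ (e+1); push_cast at this ⊢; linarith
  rw [e2, aA_succ]
  unfold eE
  rw [if_neg (by omega)]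
  have h1 : (2*(e:ℝ)+1) ≠ 0 := by positivity
  have h2 : (2*((e:ℝ)+1)+1) ≠ 0 := by positivity
  have h3 : ((2*((e+1:ℕ):ℝ)-1)) = 2*(e:ℝ)+1 := by push_cast; ring
  have h4 : ((2*((e+1:ℕ):ℝ)+1)) = 2*(e:ℝ)+3 := by push_cast; ring
  rw [h3, h4]
  have h5 : (2*(e:ℝ)+3) ≠ 0 := by positivity
  field_simp
  ring

lemma CBq_symm (i j : ℕ) : CBq i j = CBq j i := by
  unfold CBq
  rw [Nat.dist_comm i j, Nat.dist_comm (i+1) j, Nat.dist_comm i (j+1), Nat.dist_comm (i+1) (j+1)]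
  ring

lemma CBq_eval (i j : ℕ) : -(CBq i j) = (if i = j then 4 else 0) - eE (Nat.dist i j) := by
  rcases lt_trichotomy i j with h | h | h
  · rw [CBq_lt i j h, if_neg (by omega)]; ring
  · subst h
    unfold CBq
    have d1 : Nat.dist i i = 0 := by unfold Nat.dist; omega
    have d2 : Nat.dist (i+1) i = 1 := by unfold Nat.dist; omega
    have d3 : Nat.dist i (i+1) = 1 := by unfold Nat.dist; omega
    have d4 : Nat.dist (i+1) (i+1) = 0 := by unfold Nat.dist; omega
    rw [d1, d2, d3, d4, aA_zero, aA_one]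
    simp [eE]
    norm_num
  · rw [CBq_symm, CBq_lt j i h, if_neg (by omega), Nat.dist_comm]; ring

lemma Rbound (n i : ℕ) (hi : i < n) :
    ∑ j ∈ range n, eE (Nat.dist i j) ≤ 4 - 4/(2*(n:ℝ)+1) := by
  rw [Finset.range_eq_Ico, ← Finset.sum_Ico_consecutive _ (Nat.zero_le (i+1)) (by omega : i+1 ≤ n)]
  have h1 : ∑ j ∈ Ico 0 (i+1), eE (Nat.dist i j) = 2 - 2/(2*(i:ℝ)+1) := by
    rw [← Finset.range_eq_Ico]
    have e1 : ∀ j ∈ range (i+1), eE (Nat.dist i j) = (fun d => eE d) (i + 1 - 1 - j) := by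
      intro j hj
      have hj' : j ≤ i := Nat.lt_succ_iff.mp (Finset.mem_range.mp hj)
      have : Nat.dist i j = i + 1 - 1 - j := by unfold Nat.dist; omega
      rw [this]
    rw [Finset.sum_congr rfl e1, Finset.sum_range_reflect (fun d => eE d) (i+1)]
    rw [Finset.sum_range_succ']
    have : eE 0 = 0 := by simp [eE]
    rw [this, add_zero, tele_s16 i]
  have h2 : ∑ j ∈ Ico (i+1) n, eE (Nat.dist i j) = 2 - 2/(2*((n-i-1:ℕ):ℝ)+1) := by
    rw [Finset.sum_Ico_eq_sum_range]
    have e1 : ∀ d ∈ range (n - (i+1)), eE (Nat.dist i (i+1+d)) = eE (d+1) := by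
      intro d hd
      have : Nat.dist i (i+1+d) = d + 1 := by unfold Nat.dist; omega
      rw [this]
    rw [Finset.sum_congr rfl e1, tele_s16 (n - (i+1))]
    have : n - (i+1) = n - i - 1 := by omega
    rw [this]
  rw [h1, h2]
  have b0 : (0:ℝ) ≤ 2/(2*(n:ℝ)+1) := by positivity
  have b3 : 4/(2*(n:ℝ)+1) = 2/(2*(n:ℝ)+1) + 2/(2*(n:ℝ)+1) := by ring
  have b1 : 2/(2*(n:ℝ)+1) ≤ 2/(2*(i:ℝ)+1) := by
    apply div_le_div_of_nonneg_left (by norm_num) (by positivity)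
    have : (i:ℝ) ≤ (n:ℝ) := by exact_mod_cast le_of_lt hi
    linarith
  have b2 : 2/(2*(n:ℝ)+1) ≤ 2/(2*((n-i-1:ℕ):ℝ)+1) := by
    apply div_le_div_of_nonneg_left (by norm_num) (by positivity)
    have : ((n-i-1:ℕ):ℝ) ≤ (n:ℝ) := by exact_mod_cast Nat.sub_le _ _ |>.trans (Nat.sub_le _ _)
    linarith
  linarith

lemma negA (n : ℕ) (z : ℕ → ℝ) (hz : ∑ j ∈ range (n+1), z j = 0) :
    4/(2*(n:ℝ)+1) * ∑ i ∈ range n, (PZ z (i+1))^2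
      ≤ -(∑ i ∈ range (n+1), ∑ j ∈ range (n+1), z i * z j * aA (Nat.dist i j)) := by
  have hPZ : PZ z (n+1) = 0 := hz
  set Q : ℕ → ℝ := fun i => PZ z (i+1) with hQ
  -- rewrite A in Q-form
  have hA : ∑ i ∈ range (n+1), ∑ j ∈ range (n+1), z i * z j * aA (Nat.dist i j)
      = ∑ i ∈ range n, ∑ j ∈ range n, Q i * (Q j * CBq i j) := by
    have step1 : ∀ i, ∑ j ∈ range (n+1), z i * z j * aA (Nat.dist i j)
        = z i * ∑ j ∈ range (n+1), z j * aA (Nat.dist i j) := by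
      intro i; rw [Finset.mul_sum]; apply Finset.sum_congr rfl; intro j _; ring
    rw [Finset.sum_congr rfl (fun i _ => step1 i)]
    rw [abel1 n z _ hPZ]
    apply Finset.sum_congr rfl
    intro i _
    have inner : ∀ i', ∑ j ∈ range (n+1), z j * aA (Nat.dist i' j)
        = ∑ j ∈ range (n+1), z j * (fun j => aA (Nat.dist i' j)) j := by intro i'; rfl
    have g1 : (∑ j ∈ range (n+1), z j * aA (Nat.dist i j))
            - (∑ j ∈ range (n+1), z j * aA (Nat.dist (i+1) j))
        = ∑ j ∈ range (n+1), z j * (aA (Nat.dist i j) - aA (Nat.dist (i+1) j)) := by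
      rw [← Finset.sum_sub_distrib]; apply Finset.sum_congr rfl; intro j _; ring
    rw [g1, abel1 n z (fun j => aA (Nat.dist i j) - aA (Nat.dist (i+1) j)) hPZ]
    rw [Finset.mul_sum]
    apply Finset.sum_congr rfl
    intro j _
    show Q i * (Q j * _) = Q i * (Q j * CBq i j)
    unfold CBq
    ring
  rw [hA]
  -- termwise lower bound for -A
  have neg_sum : -(∑ i ∈ range n, ∑ j ∈ range n, Q i * (Q j * CBq i j))
      = ∑ i ∈ range n, ∑ j ∈ range n, Q i * Q j * (-(CBq i j)) := by
    rw [← Finset.sum_neg_distrib]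
    apply Finset.sum_congr rfl
    intro i _
    rw [← Finset.sum_neg_distrib]
    apply Finset.sum_congr rfl
    intro j _; ring
  rw [neg_sum]
  have tbound : ∀ i ∈ range n, ∀ j ∈ range n,
      (if i = j then 4 * Q i^2 else 0) - eE (Nat.dist i j) * (Q i^2 + Q j^2)/2
        ≤ Q i * Q j * (-(CBq i j)) := by
    intro i _ j _
    rw [CBq_eval]
    rcases eq_or_ne i j with h | h
    · subst h
      have : Nat.dist i i = 0 := by unfold Nat.dist; omega
      rw [if_pos rfl, if_pos rfl, this]
      have : eE 0 = 0 := by simp [eE]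
      rw [this]
      ring_nf
      nlinarith [sq_nonneg (Q i)]
    · rw [if_neg h, if_neg h]
      have he := eE_nonneg (Nat.dist i j)
      nlinarith [sq_nonneg (Q i - Q j), sq_nonneg (Q i + Q j)]
  have hge : ∑ i ∈ range n, ∑ j ∈ range n,
      ((if i = j then 4 * Q i^2 else 0) - eE (Nat.dist i j) * (Q i^2 + Q j^2)/2)
      ≤ ∑ i ∈ range n, ∑ j ∈ range n, Q i * Q j * (-(CBq i j)) := by
    apply Finset.sum_le_sum
    intro i hi
    apply Finset.sum_le_sum
    intro j hj
    exact tbound i hi j hj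
  -- compute LHS of hge
  have split : ∑ i ∈ range n, ∑ j ∈ range n,
      ((if i = j then 4 * Q i^2 else 0) - eE (Nat.dist i j) * (Q i^2 + Q j^2)/2)
      = (∑ i ∈ range n, 4 * Q i^2)
        - ∑ i ∈ range n, ∑ j ∈ range n, eE (Nat.dist i j) * (Q i^2 + Q j^2)/2 := by
    rw [← Finset.sum_sub_distrib]
    apply Finset.sum_congr rfl
    intro i hi
    rw [Finset.sum_sub_distrib]
    congr 1
    rw [Finset.sum_ite_eq (range n) i (fun _ => 4 * Q i^2), if_pos hi]
  have half : ∑ i ∈ range n, ∑ j ∈ range n, eE (Nat.dist i j) * (Q i^2 + Q j^2)/2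
      = ∑ i ∈ range n, Q i^2 * ∑ j ∈ range n, eE (Nat.dist i j) := by
    have e1 : ∑ i ∈ range n, ∑ j ∈ range n, eE (Nat.dist i j) * (Q i^2 + Q j^2)/2
        = (∑ i ∈ range n, ∑ j ∈ range n, eE (Nat.dist i j) * Q i^2/2)
          + ∑ i ∈ range n, ∑ j ∈ range n, eE (Nat.dist i j) * Q j^2/2 := by
      rw [← Finset.sum_add_distrib]
      apply Finset.sum_congr rfl
      intro i _
      rw [← Finset.sum_add_distrib]
      apply Finset.sum_congr rfl
      intro j _
      ring
    rw [e1]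
    have e2 : ∑ i ∈ range n, ∑ j ∈ range n, eE (Nat.dist i j) * Q j^2/2
        = ∑ i ∈ range n, ∑ j ∈ range n, eE (Nat.dist i j) * Q i^2/2 := by
      rw [Finset.sum_comm]
      apply Finset.sum_congr rfl
      intro i _
      apply Finset.sum_congr rfl
      intro j _
      rw [Nat.dist_comm]
    rw [e2, ← Finset.sum_add_distrib]
    apply Finset.sum_congr rfl
    intro i _
    rw [Finset.mul_sum, ← Finset.sum_add_distrib]
    apply Finset.sum_congr rfl
    intro j _
    ring
  have rbd : ∑ i ∈ range n, Q i^2 * ∑ j ∈ range n, eE (Nat.dist i j)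
      ≤ ∑ i ∈ range n, Q i^2 * (4 - 4/(2*(n:ℝ)+1)) := by
    apply Finset.sum_le_sum
    intro i hi
    have := Rbound n i (Finset.mem_range.mp hi)
    exact mul_le_mul_of_nonneg_left this (sq_nonneg (Q i))
  have final : 4/(2*(n:ℝ)+1) * ∑ i ∈ range n, Q i^2
      ≤ (∑ i ∈ range n, 4 * Q i^2) - ∑ i ∈ range n, Q i^2 * (4 - 4/(2*(n:ℝ)+1)) := by
    rw [Finset.mul_sum, ← Finset.sum_sub_distrib]
    apply Finset.sum_le_sum
    intro i _
    ring_nf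
    nlinarith [sq_nonneg (Q i)]
  calc 4/(2*(n:ℝ)+1) * ∑ i ∈ range n, Q i^2
      ≤ (∑ i ∈ range n, 4 * Q i^2) - ∑ i ∈ range n, Q i^2 * (4 - 4/(2*(n:ℝ)+1)) := final
    _ ≤ (∑ i ∈ range n, 4 * Q i^2)
        - ∑ i ∈ range n, Q i^2 * ∑ j ∈ range n, eE (Nat.dist i j) := by linarith [rbd]
    _ = ∑ i ∈ range n, ∑ j ∈ range n,
          ((if i = j then 4 * Q i^2 else 0) - eE (Nat.dist i j) * (Q i^2 + Q j^2)/2) := by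
        rw [split, half]
    _ ≤ _ := hge

lemma Qzero (n : ℕ) (z : ℕ → ℝ) (hz : ∑ j ∈ range (n+1), z j = 0)
    (hQ : ∀ i ∈ range n, PZ z (i+1) = 0) : ∀ j ∈ range (n+1), z j = 0 := by
  have hP : ∀ k, k ≤ n + 1 → PZ z k = 0 := by
    intro k hk
    rcases Nat.eq_zero_or_pos k with h0 | hpos
    · subst h0; rfl
    · rcases Nat.lt_or_ge k (n+1) with h | h
      · obtain ⟨i, hi⟩ : ∃ i, k = i + 1 := ⟨k - 1, by omega⟩
        subst hi
        exact hQ i (Finset.mem_range.mpr (by omega))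
      · have : k = n + 1 := by omega
        subst this
        exact hz
  intro j hj
  have hj' : j ≤ n := Nat.lt_succ_iff.mp (Finset.mem_range.mp hj)
  have e : z j = PZ z (j+1) - PZ z j := by
    unfold PZ; rw [Finset.sum_range_succ]; ring
  rw [e, hP (j+1) (by omega), hP j (by omega)]
  ring


lemma digamma_add_one (x : ℝ) (hx : 0 < x) : digamma (x+1) = digamma x + 1/x := by
  have hne : ∀ m : ℕ, x ≠ -m := by
    intro m
    have : (0:ℝ) ≤ m := Nat.cast_nonneg m
    intro h; rw [h] at hx; linarith
  have hΓdiff : DifferentiableAt ℝ Real.Gamma x := Real.differentiableAt_Gamma hne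
  have hΓpos : 0 < Real.Gamma x := Real.Gamma_pos_of_pos hx
  have hlogdiff : DifferentiableAt ℝ (fun y => Real.log (Real.Gamma y)) x :=
    hΓdiff.log hΓpos.ne'
  have heq : (fun y => Real.log (Real.Gamma (y+1)))
      =ᶠ[nhds x] (fun y => Real.log y + Real.log (Real.Gamma y)) := by
    filter_upwards [eventually_gt_nhds hx] with y hy
    rw [Real.Gamma_add_one hy.ne', Real.log_mul hy.ne' (Real.Gamma_pos_of_pos hy).ne']
  have h1 : digamma (x+1) = deriv (fun y => Real.log (Real.Gamma (y+1))) x := by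
    unfold digamma
    rw [deriv_comp_add_const (fun y => Real.log (Real.Gamma y)) 1 x]
  rw [h1, heq.deriv_eq]
  rw [deriv_fun_add (Real.differentiableAt_log hx.ne') hlogdiff]
  rw [Real.deriv_log]
  unfold digamma
  rw [one_div]
  ring

lemma dig_shift (k : ℕ) : digamma (1/2 + (k:ℝ)) = digamma (1/2) + aA k := by
  induction k with
  | zero => simp [aA_zero]
  | succ k ih =>
    have hx : (0:ℝ) < 1/2 + (k:ℝ) := by positivity
    have e : (1/2 + ((k:ℝ)+1)) = (1/2 + (k:ℝ)) + 1 := by ring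
    push_cast
    rw [e, digamma_add_one _ hx]
    push_cast at ih
    rw [ih, aA_succ]
    have hne : (2*(k:ℝ)+1) ≠ 0 := by positivity
    have h2 : 1/(1/2 + (k:ℝ)) = 2/(2*(k:ℝ)+1) := by
      rw [div_eq_div_iff (by positivity) hne]; ring
    rw [h2]; ring

lemma absdist (a b : ℕ) : |(a:ℝ) - (b:ℝ)| = ((Nat.dist a b : ℕ):ℝ) := by
  rcases le_total a b with h | h
  · have hd : Nat.dist a b = b - a := by unfold Nat.dist; omega
    have hc : ((a:ℝ) - (b:ℝ)) ≤ 0 := by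
      have : (a:ℝ) ≤ (b:ℝ) := by exact_mod_cast h
      linarith
    rw [hd, abs_of_nonpos hc]
    push_cast [Nat.cast_sub h]
    ring
  · have hd : Nat.dist a b = a - b := by unfold Nat.dist; omega
    have hc : (0:ℝ) ≤ ((a:ℝ) - (b:ℝ)) := by
      have : (b:ℝ) ≤ (a:ℝ) := by exact_mod_cast h
      linarith
    rw [hd, abs_of_nonneg hc]
    push_cast [Nat.cast_sub h]
    ring

lemma hterm (a b : ℕ) : digamma (1/2 + |(a:ℝ) - (b:ℝ)|)
    = digamma (1/2) + aA (Nat.dist a b) := by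
  rw [absdist, dig_shift]

lemma hDform (n : ℕ) (y : ℕ → ℝ) :
    ∑ i : Fin (n+1), ∑ j : Fin (n+1), y i.1 * y j.1 * digamma (1/2 + |(i.1:ℝ) - (j.1:ℝ)|)
    = digamma (1/2) * (∑ i ∈ range (n+1), y i)^2
      + ∑ i ∈ range (n+1), ∑ j ∈ range (n+1), y i * y j * aA (Nat.dist i j) := by
  have s1 : ∀ a : ℕ, ∑ j : Fin (n+1), y a * y j.1 * digamma (1/2 + |(a:ℝ) - (j.1:ℝ)|)
      = ∑ j ∈ range (n+1), y a * y j * (digamma (1/2) + aA (Nat.dist a j)) := by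
    intro a
    rw [← Fin.sum_univ_eq_sum_range (fun b => y a * y b * (digamma (1/2) + aA (Nat.dist a b))) (n+1)]
    apply Finset.sum_congr rfl
    intro j _
    rw [hterm a j.1]
  have s2 : ∑ i : Fin (n+1), ∑ j : Fin (n+1), y i.1 * y j.1 * digamma (1/2 + |(i.1:ℝ) - (j.1:ℝ)|)
      = ∑ i ∈ range (n+1), ∑ j ∈ range (n+1), y i * y j * (digamma (1/2) + aA (Nat.dist i j)) := by
    rw [← Fin.sum_univ_eq_sum_range
      (fun a => ∑ j ∈ range (n+1), y a * y j * (digamma (1/2) + aA (Nat.dist a j))) (n+1)]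
    apply Finset.sum_congr rfl
    intro i _
    exact s1 i.1
  rw [s2]
  have s3 : ∀ i, ∑ j ∈ range (n+1), y i * y j * (digamma (1/2) + aA (Nat.dist i j))
      = digamma (1/2) * (y i * ∑ j ∈ range (n+1), y j)
        + ∑ j ∈ range (n+1), y i * y j * aA (Nat.dist i j) := by
    intro i
    simp only [Finset.mul_sum]
    rw [← Finset.sum_add_distrib]
    apply Finset.sum_congr rfl
    intro j _
    ring
  rw [Finset.sum_congr rfl (fun i _ => s3 i), Finset.sum_add_distrib]
  congr 1
  have : ∀ x ∈ range (n+1), digamma (1/2) * (y x * ∑ j ∈ range (n+1), y j)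
      = y x * (digamma (1/2) * ∑ j ∈ range (n+1), y j) := by intro x _; ring
  rw [Finset.sum_congr rfl this, ← Finset.sum_mul]
  ring

theorem stmt_16 (n : ℕ) (t : ℝ) :
    (∀ x : Fin (n + 1) → ℝ, x ≠ 0 →
        0 < t * (∑ i, x i) ^ 2 -
          ∑ i, ∑ j, x i * x j * digamma (1/2 + |(i.1 : ℝ) - (j.1 : ℝ)|)) ↔
      digamma (1/2) + ∑ k ∈ Finset.range n, (1 : ℝ) / (k + 1) < t := by
  have hh_eq : (∑ k ∈ Finset.range n, (1 : ℝ) / (k + 1)) = hH n := rfl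
  have key : ∀ i ∈ range (n+1), ∑ j ∈ range (n+1), (cB j * cB (n-j)) * aA (Nat.dist i j) = hH n := by
    intro i hi
    have h := keyRange n i (Nat.lt_succ_iff.mp (Finset.mem_range.mp hi))
    rw [← h]
    rfl
  set v : ℕ → ℝ := fun j => cB j * cB (n-j) with hv
  have hv1 : ∑ j ∈ range (n+1), v j = 1 := lem3 n
  rw [hh_eq]
  constructor
  · intro h
    by_contra hlt
    push_neg at hlt
    have hx : (fun i : Fin (n+1) => v i.1) ≠ 0 := by
      intro h0
      have h1 := congrFun h0 ⟨0, Nat.succ_pos n⟩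
      simp only [Pi.zero_apply] at h1
      have h2 : (0:ℝ) < v 0 := by
        have c0 := cB_pos 0
        have cn := cB_pos (n - 0)
        simp only [hv]
        positivity
      rw [h1] at h2
      exact lt_irrefl _ h2
    have h3 : (0:ℝ) < t * (∑ i : Fin (n+1), v i.1) ^ 2 -
        ∑ i : Fin (n+1), ∑ j : Fin (n+1), v i.1 * v j.1 * digamma (1/2 + |(i.1 : ℝ) - (j.1 : ℝ)|) :=
      h _ hx
    rw [Fin.sum_univ_eq_sum_range v (n+1), hDform n v, hv1] at h3
    have hAv : ∑ i ∈ range (n+1), ∑ j ∈ range (n+1), v i * v j * aA (Nat.dist i j) = hH n := by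
      have e1 : ∀ i ∈ range (n+1), ∑ j ∈ range (n+1), v i * v j * aA (Nat.dist i j)
          = v i * hH n := by
        intro i hi
        rw [← key i hi, Finset.mul_sum]
        apply Finset.sum_congr rfl
        intro j _
        ring
      rw [Finset.sum_congr rfl e1, ← Finset.sum_mul, hv1, one_mul]
    rw [hAv] at h3
    norm_num at h3
    linarith
  · intro ht x hx
    set y : ℕ → ℝ := fun k => if hk : k < n+1 then x ⟨k, hk⟩ else 0 with hy
    have hxy : ∀ i : Fin (n+1), y i.1 = x i := by
      intro i
      simp only [hy]
      rw [dif_pos i.isLt]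
    have hgoal : t * (∑ i : Fin (n+1), x i)^2
          - ∑ i : Fin (n+1), ∑ j : Fin (n+1), x i * x j * digamma (1/2 + |(i.1:ℝ) - (j.1:ℝ)|)
        = t * (∑ i ∈ range (n+1), y i)^2
          - (digamma (1/2) * (∑ i ∈ range (n+1), y i)^2
            + ∑ i ∈ range (n+1), ∑ j ∈ range (n+1), y i * y j * aA (Nat.dist i j)) := by
      rw [← hDform n y]
      have ex : ∑ i : Fin (n+1), x i = ∑ i : Fin (n+1), y i.1 :=
        Finset.sum_congr rfl (fun i _ => (hxy i).symm)
      rw [ex, Fin.sum_univ_eq_sum_range y (n+1)]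
      congr 1
      apply Finset.sum_congr rfl
      intro i _
      apply Finset.sum_congr rfl
      intro j _
      rw [hxy i, hxy j]
    rw [hgoal]
    set S := ∑ i ∈ range (n+1), y i with hSdef
    set z : ℕ → ℝ := fun k => y k - S * v k with hz
    have hzsum : ∑ j ∈ range (n+1), z j = 0 := by
      simp only [hz]
      rw [Finset.sum_sub_distrib, ← Finset.mul_sum, hv1, ← hSdef]
      ring
    have hAdec : ∑ i ∈ range (n+1), ∑ j ∈ range (n+1), y i * y j * aA (Nat.dist i j)
        = (∑ i ∈ range (n+1), ∑ j ∈ range (n+1), z i * z j * aA (Nat.dist i j))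
          + hH n * S^2 := by
      have hyz : ∀ k, y k = z k + S * v k := by intro k; simp only [hz]; ring
      have expand : ∀ i ∈ range (n+1), ∀ j ∈ range (n+1), y i * y j * aA (Nat.dist i j)
          = z i * z j * aA (Nat.dist i j)
            + S * (z i * (v j * aA (Nat.dist i j)))
            + S * (v i * aA (Nat.dist i j) * z j)
            + S^2 * (v i * (v j * aA (Nat.dist i j))) := by
        intro i _ j _
        rw [hyz i, hyz j]
        ring
      have outer : ∀ i ∈ range (n+1), ∑ j ∈ range (n+1), y i * y j * aA (Nat.dist i j)
          = (∑ j ∈ range (n+1), z i * z j * aA (Nat.dist i j))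
            + (∑ j ∈ range (n+1), S * (z i * (v j * aA (Nat.dist i j))))
            + (∑ j ∈ range (n+1), S * (v i * aA (Nat.dist i j) * z j))
            + (∑ j ∈ range (n+1), S^2 * (v i * (v j * aA (Nat.dist i j)))) := by
        intro i hi
        rw [← Finset.sum_add_distrib, ← Finset.sum_add_distrib, ← Finset.sum_add_distrib]
        exact Finset.sum_congr rfl (fun j hj => expand i hi j hj)
      rw [Finset.sum_congr rfl outer]
      rw [Finset.sum_add_distrib, Finset.sum_add_distrib, Finset.sum_add_distrib]
      -- T2
      have hT2 : ∑ i ∈ range (n+1), ∑ j ∈ range (n+1), S * (z i * (v j * aA (Nat.dist i j))) = 0 := by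
        have e1 : ∀ i ∈ range (n+1), ∑ j ∈ range (n+1), S * (z i * (v j * aA (Nat.dist i j)))
            = S * z i * hH n := by
          intro i hi
          rw [← key i hi, Finset.mul_sum]
          apply Finset.sum_congr rfl
          intro j _
          ring
        rw [Finset.sum_congr rfl e1]
        have e2 : ∀ i ∈ range (n+1), S * z i * hH n = z i * (S * hH n) := by intro i _; ring
        rw [Finset.sum_congr rfl e2, ← Finset.sum_mul, hzsum]
        ring
      -- T3
      have hT3 : ∑ i ∈ range (n+1), ∑ j ∈ range (n+1), S * (v i * aA (Nat.dist i j) * z j) = 0 := by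
        rw [Finset.sum_comm]
        have e1 : ∀ j ∈ range (n+1), ∑ i ∈ range (n+1), S * (v i * aA (Nat.dist i j) * z j)
            = S * z j * hH n := by
          intro j hj
          have e0 : ∀ i ∈ range (n+1), S * (v i * aA (Nat.dist i j) * z j)
              = (S * z j) * (v i * aA (Nat.dist j i)) := by
            intro i _
            rw [Nat.dist_comm i j]
            ring
          rw [Finset.sum_congr rfl e0, ← Finset.mul_sum, ← key j hj]
        rw [Finset.sum_congr rfl e1]
        have e2 : ∀ j ∈ range (n+1), S * z j * hH n = z j * (S * hH n) := by intro j _; ring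
        rw [Finset.sum_congr rfl e2, ← Finset.sum_mul, hzsum]
        ring
      -- T4
      have hT4 : ∑ i ∈ range (n+1), ∑ j ∈ range (n+1), S^2 * (v i * (v j * aA (Nat.dist i j)))
          = hH n * S^2 := by
        have e1 : ∀ i ∈ range (n+1), ∑ j ∈ range (n+1), S^2 * (v i * (v j * aA (Nat.dist i j)))
            = S^2 * v i * hH n := by
          intro i hi
          rw [← key i hi, Finset.mul_sum]
          apply Finset.sum_congr rfl
          intro j _
          ring
        rw [Finset.sum_congr rfl e1]
        have e2 : ∀ i ∈ range (n+1), S^2 * v i * hH n = v i * (S^2 * hH n) := by intro i _; ring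
        rw [Finset.sum_congr rfl e2, ← Finset.sum_mul, hv1]
        ring
      rw [hT2, hT3, hT4]
      ring
    rw [hAdec]
    have hneg := negA n z hzsum
    have hc : (0:ℝ) < 4/(2*(n:ℝ)+1) := by positivity
    have hQnn : (0:ℝ) ≤ ∑ i ∈ range n, (PZ z (i+1))^2 :=
      Finset.sum_nonneg fun i _ => sq_nonneg _
    by_cases hS0 : S = 0
    · have hz_ne : ∃ j ∈ range (n+1), z j ≠ 0 := by
        by_contra hall
        push_neg at hall
        apply hx
        funext i
        have h1 : z i.1 = 0 := hall i.1 (Finset.mem_range.mpr i.isLt)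
        simp only [hz, hS0] at h1
        have h2 : y i.1 = 0 := by linarith [h1]
        have h3 : x i = 0 := by rw [← hxy i]; exact h2
        simpa using h3
      have hQpos : 0 < ∑ i ∈ range n, (PZ z (i+1))^2 := by
        rcases hQnn.lt_or_eq with hlt' | heq'
        · exact hlt'
        · exfalso
          have hQ0 : ∀ i ∈ range n, PZ z (i+1) = 0 := by
            intro i hi
            have hsq := (Finset.sum_eq_zero_iff_of_nonneg
              (fun i _ => sq_nonneg (PZ z (i+1)))).mp heq'.symm i hi
            exact sq_eq_zero_iff.mp hsq
          obtain ⟨j, hj, hzj⟩ := hz_ne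
          exact hzj (Qzero n z hzsum hQ0 j hj)
      have hApos : 0 < -(∑ i ∈ range (n+1), ∑ j ∈ range (n+1), z i * z j * aA (Nat.dist i j)) :=
        lt_of_lt_of_le (mul_pos hc hQpos) hneg
      rw [hS0]
      norm_num
      linarith [hApos]
    · have hSpos : 0 < S^2 := by positivity
      have h1 : 0 < (t - digamma (1/2) - hH n) * S^2 := mul_pos (by linarith) hSpos
      have h2 : (0:ℝ) ≤ -(∑ i ∈ range (n+1), ∑ j ∈ range (n+1), z i * z j * aA (Nat.dist i j)) :=
        le_trans (mul_nonneg hc.le hQnn) hneg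
      nlinarith [h1, h2]
end
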